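/- arXiv:1703.02912 — 3 statements merged into one kernel-verified Lean document; each statement's English description precedes it below -/
import Mathlib

section
/- Constant dwell-time stability (Theorem 2): Let T̄ > 0 and suppose there exist ε > 0 and a bounded, continuously differentiable matrix-valued function S : [0,T̄] × 𝒫 → Sⁿ with S(τ,θ) positive definite for every (τ,θ) ∈ [0,T̄] × 𝒫, such that (i) ∂_τ S(τ,θ) + ∂_ρ S(τ,θ)μ + A(θ)ᵀS(τ,θ) + S(τ,θ)A(θ) + εIₙ ⪯ 0 for all θ ∈ 𝒫, all μ ∈ 𝒟ᵛ and all τ ∈ [0,T̄], and (ii) S(0,θ) − S(T̄,η) ⪯ 0 for all θ,η ∈ 𝒫. Then for every parameter trajectory ρ with constant dwell-time T̄ and every solution x of the LPV system ẋ(t) = A(ρ(t))x(t), one has x(t) → 0 as t → ∞. -/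
/-!
Statement 0 (Theorem 2 of the paper): stability of an LPV system
`ẋ(t) = A(ρ(t)) x(t)` under piecewise differentiable parameter trajectories
with constant dwell-time `T̄`, certified by a clock/parameter dependent
quadratic Lyapunov certificate `S`.
-/

attribute [local instance] Matrix.normedAddCommGroup Matrix.normedSpace

open Matrix Filter Set


lemma aux_dot_self_nonneg {n : ℕ} (v : Fin n → ℝ) : 0 ≤ v ⬝ᵥ v :=
  Finset.sum_nonneg fun i _ => mul_self_nonneg (v i)

lemma aux_quad_bounds {n : ℕ} (hn : 0 < n) {P : Type*} [TopologicalSpace P]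
    {K : Set P} (hK : IsCompact K)
    (M : P → Matrix (Fin n) (Fin n) ℝ) (hM : Continuous M)
    (hpd : ∀ p ∈ K, (M p).PosDef) :
    ∃ a b : ℝ, 0 < a ∧ 0 < b ∧
      ∀ p ∈ K, ∀ v : Fin n → ℝ,
        a * (v ⬝ᵥ v) ≤ v ⬝ᵥ (M p *ᵥ v) ∧ v ⬝ᵥ (M p *ᵥ v) ≤ b * (v ⬝ᵥ v) := by
  classical
  rcases K.eq_empty_or_nonempty with hKe | hKne
  · exact ⟨1, 1, one_pos, one_pos, by simp [hKe]⟩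
  -- the "sphere" for the dot product
  set Q : Set (Fin n → ℝ) := {v | v ⬝ᵥ v = 1} with hQ
  have hq_cont : Continuous fun v : Fin n → ℝ => v ⬝ᵥ v := by
    unfold dotProduct
    exact continuous_finset_sum _ fun i _ => (continuous_apply i).mul (continuous_apply i)
  have hQclosed : IsClosed Q := isClosed_eq hq_cont continuous_const
  have hQbdd : Bornology.IsBounded Q := by
    apply Bornology.IsBounded.subset (Metric.isBounded_closedBall (x := (0 : Fin n → ℝ)) (r := 1))
    intro v hv
    have hvi : ∀ i, v i * v i ≤ 1 := by
      intro i
      calc v i * v i ≤ ∑ j, v j * v j :=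
            Finset.single_le_sum (fun j _ => mul_self_nonneg (v j)) (Finset.mem_univ i)
        _ = 1 := hv
    simp only [Metric.mem_closedBall, dist_zero_right]
    refine (pi_norm_le_iff_of_nonneg zero_le_one).2 fun i => ?_
    rw [Real.norm_eq_abs, abs_le_one_iff_mul_self_le_one]
    exact hvi i
  have hQc : IsCompact Q := Metric.isCompact_of_isClosed_isBounded hQclosed hQbdd
  have hQne : Q.Nonempty := by
    refine ⟨Pi.single ⟨0, hn⟩ 1, ?_⟩
    simp [hQ, dotProduct_single]
  set F : P × (Fin n → ℝ) → ℝ := fun w => w.2 ⬝ᵥ (M w.1 *ᵥ w.2) with hF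
  have hFc : Continuous F := by
    unfold F
    unfold dotProduct Matrix.mulVec
    apply continuous_finset_sum _ fun i _ => ?_
    refine ((continuous_apply i).comp continuous_snd).mul ?_
    apply continuous_finset_sum _ fun j _ => ?_
    exact (((continuous_apply j).comp ((continuous_apply i).comp
      (hM.comp continuous_fst))).mul ((continuous_apply j).comp continuous_snd))
  have hC : IsCompact (K ×ˢ Q) := hK.prod hQc
  have hCne : (K ×ˢ Q).Nonempty := hKne.prod hQne
  obtain ⟨pmin, hpmin, hmin⟩ := hC.exists_isMinOn hCne hFc.continuousOn
  obtain ⟨pmax, hpmax, hmax⟩ := hC.exists_isMaxOn hCne hFc.continuousOn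
  have key : ∀ p ∈ K, ∀ v ∈ Q, F pmin ≤ F (p, v) ∧ F (p, v) ≤ F pmax := by
    intro p hp v hv
    exact ⟨hmin (Set.mk_mem_prod hp hv), hmax (Set.mk_mem_prod hp hv)⟩
  have hamin : 0 < F pmin := by
    rcases Set.mem_prod.1 hpmin with ⟨hp1, hp2⟩
    have hvne : pmin.2 ≠ 0 := by
      intro h
      have := hp2
      rw [Set.mem_setOf_eq, h] at this
      simp at this
    have := (hpd pmin.1 hp1).dotProduct_mulVec_pos hvne
    simpa [hF] using this
  refine ⟨F pmin, F pmax, hamin, lt_of_lt_of_le hamin (hmin hpmax), ?_⟩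
  intro p hp v
  by_cases hv : v = 0
  · simp [hv, hF]
  · have hs : 0 < v ⬝ᵥ v :=
      lt_of_le_of_ne (aux_dot_self_nonneg v) (fun h => hv (dotProduct_self_eq_zero.1 h.symm))
    set s := v ⬝ᵥ v with hsdef
    set u : Fin n → ℝ := (Real.sqrt s)⁻¹ • v with hu
    have hsq : Real.sqrt s * Real.sqrt s = s := Real.mul_self_sqrt hs.le
    have hsqpos : 0 < Real.sqrt s := Real.sqrt_pos.2 hs
    have huQ : u ∈ Q := by
      simp only [hQ, Set.mem_setOf_eq, hu, smul_dotProduct, dotProduct_smul, smul_eq_mul]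
      field_simp
      rw [sq, hsq]
    have hscale : F (p, v) = s * F (p, u) := by
      simp only [hF, hu, Matrix.mulVec_smul, smul_dotProduct, dotProduct_smul, smul_eq_mul]
      field_simp
      rw [sq, hsq]
    obtain ⟨h1, h2⟩ := key p hp u huQ
    constructor
    · have := mul_le_mul_of_nonneg_left h1 hs.le
      calc F pmin * s = s * F pmin := mul_comm _ _
        _ ≤ s * F (p, u) := this
        _ = F (p, v) := hscale.symm
    · have := mul_le_mul_of_nonneg_left h2 hs.le
      calc F (p, v) = s * F (p, u) := hscale
        _ ≤ s * F pmax := this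
        _ = F pmax * s := mul_comm _ _

lemma aux_linear_box_max {N : ℕ} (νlo νhi : Fin N → ℝ) (L : (Fin N → ℝ) →ₗ[ℝ] ℝ)
    (μ : Fin N → ℝ) (hμ : μ ∈ Icc νlo νhi) :
    ∃ μ' : Fin N → ℝ, (∀ i, μ' i = νlo i ∨ μ' i = νhi i) ∧ L μ ≤ L μ' := by
  classical
  set e : Fin N → (Fin N → ℝ) := fun i => fun j => if i = j then 1 else 0 with he
  refine ⟨fun i => if 0 ≤ L (e i) then νhi i else νlo i, ?_, ?_⟩
  · intro i
    by_cases h : 0 ≤ L (e i) <;> simp [h]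
  · rw [L.pi_apply_eq_sum_univ, L.pi_apply_eq_sum_univ (fun i => if 0 ≤ L (e i) then νhi i else νlo i)]
    apply Finset.sum_le_sum
    intro i _
    simp only [smul_eq_mul]
    by_cases h : 0 ≤ L (e i)
    · simp only [if_pos h]
      exact mul_le_mul_of_nonneg_right (hμ.2 i) h
    · simp only [if_neg h]
      exact mul_le_mul_of_nonpos_right (hμ.1 i) (le_of_not_ge h)

noncomputable def entryCLM (n : ℕ) (i j : Fin n) : Matrix (Fin n) (Fin n) ℝ →L[ℝ] ℝ :=
  LinearMap.toContinuousLinearMap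
    { toFun := fun M => M i j
      map_add' := fun _ _ => rfl
      map_smul' := fun _ _ => rfl }

lemma aux_hasDerivAt_quad {n N : ℕ}
    (S : ℝ → (Fin N → ℝ) → Matrix (Fin n) (Fin n) ℝ)
    (hS_c1 : ContDiff ℝ 1 (fun p : ℝ × (Fin N → ℝ) => S p.1 p.2))
    (x : ℝ → Fin n → ℝ) (x'' : Fin n → ℝ) (ρ : ℝ → Fin N → ℝ) (ρ'' : Fin N → ℝ) (t c : ℝ)
    (hx : HasDerivAt x x'' t) (hρ : HasDerivAt ρ ρ'' t) :
    HasDerivAt (fun s => x s ⬝ᵥ (S (s - c) (ρ s) *ᵥ x s))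
      (x'' ⬝ᵥ (S (t - c) (ρ t) *ᵥ x t)
        + x t ⬝ᵥ ((fderiv ℝ (fun p : ℝ × (Fin N → ℝ) => S p.1 p.2) (t - c, ρ t) (1, ρ'')) *ᵥ x t)
        + x t ⬝ᵥ (S (t - c) (ρ t) *ᵥ x'')) t := by
  classical
  set Sfun : ℝ × (Fin N → ℝ) → Matrix (Fin n) (Fin n) ℝ := fun p => S p.1 p.2 with hSfun
  set Φ : Matrix (Fin n) (Fin n) ℝ := fderiv ℝ Sfun (t - c, ρ t) (1, ρ'') with hΦ
  -- derivative of the matrix-valued path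
  have hpair : HasDerivAt (fun s : ℝ => ((s - c, ρ s) : ℝ × (Fin N → ℝ))) (1, ρ'') t :=
    ((hasDerivAt_id t).sub_const c).prodMk hρ
  have hSderiv : HasFDerivAt Sfun (fderiv ℝ Sfun (t - c, ρ t)) (t - c, ρ t) :=
    (hS_c1.differentiable one_ne_zero (t - c, ρ t)).hasFDerivAt
  have hm : HasDerivAt (fun s => S (s - c) (ρ s)) Φ t := by
    have := hSderiv.comp_hasDerivAt t hpair
    exact this
  have hm_entry : ∀ i j, HasDerivAt (fun s => S (s - c) (ρ s) i j) (Φ i j) t := by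
    intro i j
    have := (entryCLM n i j).hasFDerivAt.comp_hasDerivAt t hm
    exact this
  have hx_entry : ∀ i, HasDerivAt (fun s => x s i) (x'' i) t := fun i => hasDerivAt_pi.mp hx i
  have inner : ∀ i, HasDerivAt (fun s => ∑ j, S (s - c) (ρ s) i j * x s j)
      (∑ j, (Φ i j * x t j + S (t - c) (ρ t) i j * x'' j)) t := by
    intro i
    exact HasDerivAt.fun_sum fun j _ => (hm_entry i j).fun_mul (hx_entry j)
  have total : HasDerivAt (fun s => ∑ i, x s i * ∑ j, S (s - c) (ρ s) i j * x s j)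
      (∑ i, (x'' i * (∑ j, S (t - c) (ρ t) i j * x t j)
        + x t i * (∑ j, (Φ i j * x t j + S (t - c) (ρ t) i j * x'' j)))) t :=
    HasDerivAt.fun_sum fun i _ => (hx_entry i).fun_mul (inner i)
  convert total using 1
  · funext s
    simp only [dotProduct, Matrix.mulVec]
  simp only [dotProduct, Matrix.mulVec, mul_add, Finset.sum_add_distrib, Finset.mul_sum]
  ring_nf




theorem constant_dwell_time_stability
    {n N : ℕ}
    -- the parameter box 𝒫 = [ρlo, ρhi] and the derivative box 𝒟 = [νlo, νhi]
    (ρlo ρhi νlo νhi : Fin N → ℝ)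
    (hbox : ρlo ≤ ρhi) (hνbox : νlo ≤ νhi)
    -- the system matrix, continuous (hence bounded) on the compact box 𝒫
    (A : (Fin N → ℝ) → Matrix (Fin n) (Fin n) ℝ)
    (hA : ContinuousOn A (Icc ρlo ρhi))
    -- the dwell-time
    (T : ℝ) (hT : 0 < T)
    -- the Lyapunov certificate
    (ε : ℝ) (hε : 0 < ε)
    (S : ℝ → (Fin N → ℝ) → Matrix (Fin n) (Fin n) ℝ)
    (hS_c1 : ContDiff ℝ 1 (fun p : ℝ × (Fin N → ℝ) => S p.1 p.2))
    (hS_symm : ∀ τ θ, (S τ θ).IsSymm)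
    (hS_pd : ∀ τ ∈ Icc (0 : ℝ) T, ∀ θ ∈ Icc ρlo ρhi, (S τ θ).PosDef)
    -- condition (i): ∂_τ S + ∂_ρ S μ + AᵀS + SA + εI ⪯ 0 on [0,T̄] × 𝒫 × 𝒟ᵛ
    (hflow : ∀ τ ∈ Icc (0 : ℝ) T, ∀ θ ∈ Icc ρlo ρhi,
      ∀ μ : Fin N → ℝ, (∀ i, μ i = νlo i ∨ μ i = νhi i) →
      (-(fderiv ℝ (fun p : ℝ × (Fin N → ℝ) => S p.1 p.2) (τ, θ) (1, 0)
          + fderiv ℝ (fun p : ℝ × (Fin N → ℝ) => S p.1 p.2) (τ, θ) (0, μ)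
          + (A θ)ᵀ * S τ θ + S τ θ * A θ
          + ε • (1 : Matrix (Fin n) (Fin n) ℝ))).PosSemidef)
    -- condition (ii): S(0,θ) − S(T̄,η) ⪯ 0 on 𝒫 × 𝒫
    (hjump : ∀ θ ∈ Icc ρlo ρhi, ∀ η ∈ Icc ρlo ρhi, (S T η - S 0 θ).PosSemidef)
    -- a parameter trajectory with constant dwell-time T̄ (jump times t_k = k T̄)
    (ρ ρ' : ℝ → Fin N → ℝ)
    (hρP : ∀ t ≥ (0 : ℝ), ρ t ∈ Icc ρlo ρhi)
    (hρleft : ∀ t > (0 : ℝ), Tendsto ρ (nhdsWithin t (Iio t)) (nhds (ρ t)))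
    (hρdiff : ∀ k : ℕ, ∀ t ∈ Ioo ((k : ℝ) * T) (((k : ℝ) + 1) * T),
      HasDerivAt ρ (ρ' t) t ∧ ρ' t ∈ Icc νlo νhi)
    -- a solution of the LPV system
    (x : ℝ → Fin n → ℝ)
    (hxcont : ContinuousOn x (Ici 0))
    (hxdiff : ∀ t ≥ (0 : ℝ), (∀ k : ℕ, 1 ≤ k → t ≠ (k : ℝ) * T) →
      HasDerivWithinAt x ((A (ρ t)).mulVec (x t)) (Ici 0) t) :
    Tendsto x atTop (nhds 0) := by
  classical
  rcases Nat.eq_zero_or_pos n with hn | hn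
  · subst hn
    have hx0 : x = fun _ => (0 : Fin 0 → ℝ) := funext fun t => Subsingleton.elim _ _
    rw [hx0]
    exact tendsto_const_nhds
  set Sfun : ℝ × (Fin N → ℝ) → Matrix (Fin n) (Fin n) ℝ := fun p => S p.1 p.2 with hSfun
  have hScont : Continuous Sfun := hS_c1.continuous
  -- uniform quadratic bounds on the compact set [0,T] × 𝒫
  obtain ⟨a, b, ha, hb, hab⟩ := aux_quad_bounds hn
    ((isCompact_Icc (a := (0:ℝ)) (b := T)).prod (isCompact_Icc (a := ρlo) (b := ρhi)))
    Sfun hScont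
    (fun p hp => hS_pd p.1 hp.1 p.2 hp.2)
  have hbounds : ∀ τ ∈ Icc (0:ℝ) T, ∀ θ ∈ Icc ρlo ρhi, ∀ v : Fin n → ℝ,
      a * (v ⬝ᵥ v) ≤ v ⬝ᵥ (S τ θ *ᵥ v) ∧ v ⬝ᵥ (S τ θ *ᵥ v) ≤ b * (v ⬝ᵥ v) := by
    intro τ hτ θ hθ v
    exact hab (τ, θ) (Set.mk_mem_prod hτ hθ) v
  set c : ℝ := ε / b with hc
  have hcpos : 0 < c := div_pos hε hb
  set W : ℕ → ℝ → ℝ := fun k t => x t ⬝ᵥ (S (t - (k:ℝ)*T) (ρ t) *ᵥ x t) with hW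
  -- time interval membership facts
  have hkT_nonneg : ∀ k : ℕ, 0 ≤ (k:ℝ) * T := fun k =>
    mul_nonneg (Nat.cast_nonneg k) hT.le
  -- (1) derivative bound inside each interval
  have key1 : ∀ k : ℕ, ∀ t ∈ Ioo ((k:ℝ)*T) (((k:ℝ)+1)*T),
      ∃ d : ℝ, HasDerivAt (W k) d t ∧ d ≤ -(ε * (x t ⬝ᵥ x t)) := by
    intro k t ht
    have ht0 : (0:ℝ) < t := lt_of_le_of_lt (hkT_nonneg k) ht.1
    have hρt := hρdiff k t ht
    have hxne : ∀ m : ℕ, 1 ≤ m → t ≠ (m:ℝ)*T := by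
      intro m _ hEq
      have h1 : (k:ℝ)*T < (m:ℝ)*T := hEq ▸ ht.1
      have h2 : (m:ℝ)*T < ((k:ℝ)+1)*T := hEq ▸ ht.2
      have hk : (k:ℝ) < (m:ℝ) := lt_of_mul_lt_mul_right (by linarith) hT.le
      have hm2 : (m:ℝ) < (k:ℝ)+1 := lt_of_mul_lt_mul_right (by linarith) hT.le
      have hk' : k < m := by exact_mod_cast hk
      have hm2' : m < k + 1 := by exact_mod_cast (by push_cast; linarith : (m:ℝ) < ((k+1:ℕ):ℝ))
      omega
    have hx : HasDerivAt x (A (ρ t) *ᵥ x t) t :=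
      (hxdiff t ht0.le hxne).hasDerivAt (Ici_mem_nhds ht0)
    have hder := aux_hasDerivAt_quad S hS_c1 x (A (ρ t) *ᵥ x t) ρ (ρ' t) t ((k:ℝ)*T) hx hρt.1
    rw [← hSfun] at hder
    refine ⟨_, hder, ?_⟩
    have hτmem : t - (k:ℝ)*T ∈ Icc (0:ℝ) T := ⟨by linarith [ht.1], by linarith [ht.2]⟩
    have hθmem : ρ t ∈ Icc ρlo ρhi := hρP t ht0.le
    set τ : ℝ := t - (k:ℝ)*T with hτ
    set θ : Fin N → ℝ := ρ t with hθ
    set v : Fin n → ℝ := x t with hv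
    set m0 : Matrix (Fin n) (Fin n) ℝ := S τ θ with hm0
    set L : (Fin N → ℝ) →ₗ[ℝ] ℝ :=
      { toFun := fun w => v ⬝ᵥ ((fderiv ℝ Sfun (τ, θ)) (0, w) *ᵥ v)
        map_add' := by
          intro w1 w2
          rw [show ((0:ℝ), w1 + w2) = ((0:ℝ), w1) + ((0:ℝ), w2) by simp [Prod.mk_add_mk]]
          rw [map_add, Matrix.add_mulVec, dotProduct_add]
        map_smul' := by
          intro m w
          rw [show ((0:ℝ), m • w) = m • ((0:ℝ), w) by simp [Prod.smul_mk]]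
          rw [_root_.map_smul, Matrix.smul_mulVec, dotProduct_smul]
          simp } with hL
    obtain ⟨μ', hvert, hLle⟩ := aux_linear_box_max νlo νhi L (ρ' t) hρt.2
    have hpsd := (hflow τ hτmem θ hθmem μ' hvert).dotProduct_mulVec_nonneg v
    have hstar : (star v : Fin n → ℝ) = v := rfl
    rw [hstar, Matrix.neg_mulVec, dotProduct_neg] at hpsd
    have hpsd' : v ⬝ᵥ (((fderiv ℝ Sfun (τ, θ)) (1, 0) + (fderiv ℝ Sfun (τ, θ)) (0, μ')
        + (A θ)ᵀ * m0 + m0 * A θ + ε • (1 : Matrix (Fin n) (Fin n) ℝ)) *ᵥ v) ≤ 0 := by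
      linarith [hpsd]
    have hexp : v ⬝ᵥ (((fderiv ℝ Sfun (τ, θ)) (1, 0) + (fderiv ℝ Sfun (τ, θ)) (0, μ')
        + (A θ)ᵀ * m0 + m0 * A θ + ε • (1 : Matrix (Fin n) (Fin n) ℝ)) *ᵥ v)
        = v ⬝ᵥ ((fderiv ℝ Sfun (τ, θ)) (1, 0) *ᵥ v) + v ⬝ᵥ ((fderiv ℝ Sfun (τ, θ)) (0, μ') *ᵥ v)
          + v ⬝ᵥ (((A θ)ᵀ * m0) *ᵥ v) + v ⬝ᵥ ((m0 * A θ) *ᵥ v) + ε * (v ⬝ᵥ v) := by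
      simp [Matrix.add_mulVec, dotProduct_add, Matrix.smul_mulVec,
        Matrix.one_mulVec, dotProduct_smul, smul_eq_mul]
    rw [hexp] at hpsd'
    -- identify the three summands of the derivative
    have e1 : (A θ *ᵥ v) ⬝ᵥ (m0 *ᵥ v) = v ⬝ᵥ (((A θ)ᵀ * m0) *ᵥ v) := by
      rw [← Matrix.mulVec_mulVec, Matrix.dotProduct_mulVec v (A θ)ᵀ, Matrix.vecMul_transpose]
    have hsplit : (fderiv ℝ Sfun (τ, θ)) (1, ρ' t)
        = (fderiv ℝ Sfun (τ, θ)) (1, 0) + (fderiv ℝ Sfun (τ, θ)) (0, ρ' t) := by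
      rw [← map_add]
      congr 1
      simp [Prod.mk_add_mk]
    have e2 : v ⬝ᵥ ((fderiv ℝ Sfun (τ, θ)) (1, ρ' t) *ᵥ v)
        = v ⬝ᵥ ((fderiv ℝ Sfun (τ, θ)) (1, 0) *ᵥ v) + L (ρ' t) := by
      rw [hsplit, Matrix.add_mulVec, dotProduct_add]
      rfl
    have e3 : v ⬝ᵥ (m0 *ᵥ (A θ *ᵥ v)) = v ⬝ᵥ ((m0 * A θ) *ᵥ v) := by
      rw [Matrix.mulVec_mulVec]
    have hLμ' : L μ' = v ⬝ᵥ ((fderiv ℝ Sfun (τ, θ)) (0, μ') *ᵥ v) := rfl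
    rw [e1, e2, e3]
    rw [hLμ'] at hLle
    linarith [hpsd', hLle]
  -- continuity of W k on the half-open interval
  have hWcont : ∀ k : ℕ, ContinuousOn (W k) (Ioc ((k:ℝ)*T) (((k:ℝ)+1)*T)) := by
    intro k
    set s : Set ℝ := Ioc ((k:ℝ)*T) (((k:ℝ)+1)*T) with hs
    have hsub : s ⊆ Ici (0:ℝ) := fun t ht => le_trans (hkT_nonneg k) ht.1.le
    have hxc : ContinuousOn x s := hxcont.mono hsub
    have hρc : ContinuousOn ρ s := by
      intro t ht
      rcases eq_or_lt_of_le ht.2 with heq | hlt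
      · have hb0 : (0:ℝ) < t := lt_of_le_of_lt (hkT_nonneg k) ht.1
        have h1 : ContinuousWithinAt ρ (Iio t) t := hρleft t hb0
        have h2 : ContinuousWithinAt ρ (insert t (Iio t)) t := h1.insert
        refine h2.mono ?_
        intro u hu
        rcases eq_or_lt_of_le hu.2 with h | h
        · left; rw [h, heq]
        · right; exact lt_of_lt_of_le h (le_of_eq heq.symm)
      · exact ((hρdiff k t ⟨ht.1, hlt⟩).1.continuousAt).continuousWithinAt
    have hSmat : ContinuousOn (fun t => S (t - (k:ℝ)*T) (ρ t)) s := by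
      have := hScont.comp_continuousOn
        (ContinuousOn.prodMk (f := fun t : ℝ => t - (k:ℝ)*T)
          ((continuousOn_id.sub continuousOn_const)) hρc)
      simpa [Function.comp_def, hSfun] using this
    show ContinuousOn (fun t => x t ⬝ᵥ (S (t - (k:ℝ)*T) (ρ t) *ᵥ x t)) s
    unfold dotProduct Matrix.mulVec
    apply continuousOn_finset_sum _ fun i _ => ?_
    refine ((continuous_apply i).comp_continuousOn hxc).mul ?_
    apply continuousOn_finset_sum _ fun j _ => ?_
    exact (((continuous_apply j).comp (continuous_apply i)).comp_continuousOn hSmat).mul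
      ((continuous_apply j).comp_continuousOn hxc)
  -- (2) monotonicity of the exponentially weighted Lyapunov function
  have hg_anti : ∀ k : ℕ, AntitoneOn (fun t => Real.exp (c*t) * W k t)
      (Ioc ((k:ℝ)*T) (((k:ℝ)+1)*T)) := by
    intro k
    apply antitoneOn_of_deriv_nonpos (convex_Ioc _ _)
    · exact (Real.continuous_exp.comp (continuous_const.mul continuous_id)).continuousOn.mul (hWcont k)
    · rw [interior_Ioc]
      intro t ht
      obtain ⟨d, hd, _⟩ := key1 k t ht
      exact (((hasDerivAt_id t).const_mul c).exp.mul hd).differentiableAt.differentiableWithinAt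
    · rw [interior_Ioc]
      intro t ht
      obtain ⟨d, hd, hdle⟩ := key1 k t ht
      have hder : HasDerivAt (fun t => Real.exp (c*t) * W k t)
          (Real.exp (c*t) * (c * 1) * W k t + Real.exp (c*t) * d) t :=
        (((hasDerivAt_id t).const_mul c).exp).mul hd
      rw [hder.deriv]
      have hWub : W k t ≤ b * (x t ⬝ᵥ x t) := by
        refine (hbounds (t - (k:ℝ)*T) ⟨by linarith [ht.1], by linarith [ht.2]⟩
          (ρ t) (hρP t (le_trans (hkT_nonneg k) ht.1.le)) (x t)).2
      have hexp : (0:ℝ) < Real.exp (c*t) := Real.exp_pos _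
      have : c * W k t + d ≤ 0 := by
        have h1 : c * W k t ≤ c * (b * (x t ⬝ᵥ x t)) := mul_le_mul_of_nonneg_left hWub hcpos.le
        have h2 : c * b = ε := by
          rw [hc]; field_simp
        have h3 : c * (b * (x t ⬝ᵥ x t)) = ε * (x t ⬝ᵥ x t) := by
          rw [← h2]; ring
        linarith
      nlinarith
  -- definition of M and its properties
  set M : ℕ → ℝ := fun k => x ((k:ℝ)*T) ⬝ᵥ (S T (ρ ((k:ℝ)*T)) *ᵥ x ((k:ℝ)*T)) with hM
  have hMnonneg : ∀ k, 0 ≤ M k := by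
    intro k
    have := (hbounds T ⟨hT.le, le_refl T⟩ (ρ ((k:ℝ)*T)) (hρP _ (hkT_nonneg k)) (x ((k:ℝ)*T))).1
    nlinarith [aux_dot_self_nonneg (x ((k:ℝ)*T))]
  -- (3) the jump estimate: within interval k, the weighted function is dominated
  have key2 : ∀ k : ℕ, ∀ t ∈ Ioc ((k:ℝ)*T) (((k:ℝ)+1)*T),
      Real.exp (c*t) * W k t ≤ Real.exp (c*((k:ℝ)*T)) * M k := by
    intro k t ht
    set t0 : ℝ := (k:ℝ)*T with ht0def
    set E : ℝ → ℝ := fun s => W k s - x t0 ⬝ᵥ (S 0 (ρ s) *ᵥ x t0) with hE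
    have hev : ∀ᶠ s in nhdsWithin t0 (Ioi t0),
        Real.exp (c*t) * W k t ≤ Real.exp (c*s) * (M k + E s) := by
      filter_upwards [Ioo_mem_nhdsGT ht.1]
        with s hs
      have hsIoc : s ∈ Ioc t0 (((k:ℝ)+1)*T) := ⟨hs.1, le_trans hs.2.le ht.2⟩
      have hmono := hg_anti k hsIoc ht hs.2.le
      have hθs : ρ s ∈ Icc ρlo ρhi := hρP s (le_trans (hkT_nonneg k) hsIoc.1.le)
      have hθ0 : ρ t0 ∈ Icc ρlo ρhi := hρP t0 (hkT_nonneg k)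
      have hpsd := (hjump (ρ s) hθs (ρ t0) hθ0).dotProduct_mulVec_nonneg (x t0)
      have hstar : (star (x t0) : Fin n → ℝ) = x t0 := rfl
      rw [hstar, Matrix.sub_mulVec, dotProduct_sub] at hpsd
      have hineq : x t0 ⬝ᵥ (S 0 (ρ s) *ᵥ x t0) ≤ M k := by
        simp only [hM]
        linarith [hpsd]
      have hWs : W k s ≤ M k + E s := by
        simp only [hE]
        linarith [hineq]
      calc Real.exp (c*t) * W k t ≤ Real.exp (c*s) * W k s := hmono
        _ ≤ Real.exp (c*s) * (M k + E s) :=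
            mul_le_mul_of_nonneg_left hWs (Real.exp_pos _).le
    have hEtend : Tendsto E (nhdsWithin t0 (Ioi t0)) (nhds 0) := by
      set G : (Fin n → ℝ) × ℝ × (Fin N → ℝ) → ℝ := fun w => w.1 ⬝ᵥ (S w.2.1 w.2.2 *ᵥ w.1)
        with hG
      have hGc : Continuous G := by
        show Continuous fun w : (Fin n → ℝ) × ℝ × (Fin N → ℝ) => w.1 ⬝ᵥ (S w.2.1 w.2.2 *ᵥ w.1)
        unfold dotProduct Matrix.mulVec
        apply continuous_finset_sum _ fun i _ => ?_
        refine ((continuous_apply i).comp continuous_fst).mul ?_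
        apply continuous_finset_sum _ fun j _ => ?_
        exact (((continuous_apply j).comp ((continuous_apply i).comp
          (hScont.comp continuous_snd))).mul ((continuous_apply j).comp continuous_fst))
      set Kc : Set ((Fin n → ℝ) × ℝ × (Fin N → ℝ)) :=
        Metric.closedBall (x t0) 1 ×ˢ (Icc (-1) T ×ˢ Icc ρlo ρhi) with hKc
      have hKcomp : IsCompact Kc :=
        (isCompact_closedBall _ _).prod (isCompact_Icc.prod isCompact_Icc)
      have hGuc := hKcomp.uniformContinuousOn_of_continuous hGc.continuousOn
      rw [Metric.uniformContinuousOn_iff] at hGuc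
      rw [Metric.tendsto_nhds]
      intro δ hδ
      obtain ⟨η, hη, hGη⟩ := hGuc δ hδ
      have hxat : ContinuousWithinAt x (Ici 0) t0 := hxcont t0 (hkT_nonneg k)
      have hmonofil : nhdsWithin t0 (Ioi t0) ≤ nhdsWithin t0 (Ici 0) :=
        nhdsWithin_mono t0 (fun s hs => le_trans (hkT_nonneg k) hs.le)
      have h1 : Tendsto x (nhdsWithin t0 (Ioi t0)) (nhds (x t0)) :=
        hxat.tendsto.mono_left hmonofil
      have hxev : ∀ᶠ s in nhdsWithin t0 (Ioi t0), dist (x s) (x t0) < min η 1 :=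
        (Metric.tendsto_nhds.1 h1) _ (lt_min hη one_pos)
      have hsev : ∀ᶠ s in nhdsWithin t0 (Ioi t0), s ∈ Ioo t0 (t0 + min η T) :=
        Ioo_mem_nhdsGT (by
          have : (0:ℝ) < min η T := lt_min hη hT
          linarith)
      filter_upwards [hxev, hsev] with s hs1 hs2
      have hθs : ρ s ∈ Icc ρlo ρhi := hρP s (le_trans (hkT_nonneg k) hs2.1.le)
      have hstT : s - t0 < min η T := by
        have := hs2.2
        linarith
      have p1 : ((x s, (s - t0, ρ s)) : (Fin n → ℝ) × ℝ × (Fin N → ℝ)) ∈ Kc := by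
        refine ⟨Metric.mem_closedBall.2 (le_trans hs1.le (min_le_right _ _)), ?_, hθs⟩
        show s - t0 ∈ Icc (-1:ℝ) T
        constructor
        · linarith [hs2.1]
        · linarith [hstT, min_le_right η T]
      have p2 : ((x t0, ((0:ℝ), ρ s)) : (Fin n → ℝ) × ℝ × (Fin N → ℝ)) ∈ Kc := by
        refine ⟨Metric.mem_closedBall_self zero_le_one, ?_, hθs⟩
        show (0:ℝ) ∈ Icc (-1:ℝ) T
        exact ⟨by linarith, hT.le⟩
      have hdista : dist ((x s, (s - t0, ρ s)) : (Fin n → ℝ) × ℝ × (Fin N → ℝ))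
          (x t0, ((0:ℝ), ρ s)) < η := by
        rw [Prod.dist_eq, Prod.dist_eq]
        have hd1 : dist (x s) (x t0) < η := lt_of_lt_of_le hs1 (min_le_left _ _)
        have hd2 : dist (s - t0) (0:ℝ) < η := by
          rw [Real.dist_eq, sub_zero, abs_of_pos (by linarith [hs2.1] : (0:ℝ) < s - t0)]
          exact lt_of_lt_of_le hstT (min_le_left _ _)
        have hd3 : dist (ρ s) (ρ s) = 0 := dist_self _
        rw [hd3]
        exact max_lt hd1 (max_lt hd2 hη)
      have hGd := hGη _ p1 _ p2 hdista
      have hEeq : E s = G (x s, (s - t0, ρ s)) - G (x t0, ((0:ℝ), ρ s)) := by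
        simp only [hE, hG, hW, ht0def]
      rw [Real.dist_eq, sub_zero, hEeq, ← Real.dist_eq]
      exact hGd
    have hRHS : Tendsto (fun s => Real.exp (c*s) * (M k + E s)) (nhdsWithin t0 (Ioi t0))
        (nhds (Real.exp (c*t0) * (M k + 0))) := by
      apply Tendsto.mul
      · exact ((Real.continuous_exp.comp (continuous_const.mul continuous_id)).tendsto t0).mono_left
          nhdsWithin_le_nhds
      · exact tendsto_const_nhds.add hEtend
    rw [add_zero] at hRHS
    exact ge_of_tendsto hRHS hev
  -- (4) geometric decay of M
  set r : ℝ := Real.exp (-(c*T)) with hr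
  have hr0 : 0 < r := Real.exp_pos _
  have hr1 : r < 1 := by
    rw [hr, Real.exp_lt_one_iff]
    nlinarith
  have hMdec : ∀ k : ℕ, M (k+1) ≤ r * M k := by
    intro k
    have hmem : ((k:ℝ)+1)*T ∈ Ioc ((k:ℝ)*T) (((k:ℝ)+1)*T) := by
      constructor
      · nlinarith
      · exact le_refl _
    have h2 := key2 k (((k:ℝ)+1)*T) hmem
    have hWend : W k (((k:ℝ)+1)*T) = M (k+1) := by
      simp only [hW, hM]
      have hcast : ((k+1:ℕ):ℝ) = (k:ℝ)+1 := by push_cast; ring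
      rw [hcast]
      have h1 : ((k:ℝ)+1)*T - (k:ℝ)*T = T := by ring
      rw [h1]
    rw [hWend] at h2
    have hpos : (0:ℝ) < Real.exp (c*(((k:ℝ)+1)*T)) := Real.exp_pos _
    have h3 : Real.exp (c*(((k:ℝ)+1)*T)) * M (k+1)
        ≤ Real.exp (c*(((k:ℝ)+1)*T)) * (r * M k) := by
      have e2 : Real.exp (c*(((k:ℝ)+1)*T)) * (r * M k) = Real.exp (c*((k:ℝ)*T)) * M k := by
        rw [hr, ← mul_assoc, ← Real.exp_add]
        congr 2
        ring
      rw [e2]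
      exact h2
    exact le_of_mul_le_mul_left h3 hpos
  have hMgeo : ∀ k : ℕ, M (k+1) ≤ r^k * M 1 := by
    intro k
    induction k with
    | zero => simp
    | succ m ih =>
      calc M (m+2) ≤ r * M (m+1) := hMdec (m+1)
        _ ≤ r * (r^m * M 1) := mul_le_mul_of_nonneg_left ih hr0.le
        _ = r^(m+1) * M 1 := by ring
  -- (5) the pointwise bound on the state
  have key3 : ∀ k : ℕ, ∀ t ∈ Ioc ((k:ℝ)*T) (((k:ℝ)+1)*T),
      a * (x t ⬝ᵥ x t) ≤ M k := by
    intro k t ht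
    have hlow := (hbounds (t - (k:ℝ)*T) ⟨by linarith [ht.1], by linarith [ht.2]⟩
      (ρ t) (hρP t (le_trans (hkT_nonneg k) ht.1.le)) (x t)).1
    have h2 := key2 k t ht
    have hexp1 : Real.exp (c*((k:ℝ)*T)) ≤ Real.exp (c*t) :=
      Real.exp_le_exp.2 (by nlinarith [ht.1])
    have hexp0 : (0:ℝ) < Real.exp (c*((k:ℝ)*T)) := Real.exp_pos _
    have hexpt : (0:ℝ) < Real.exp (c*t) := Real.exp_pos _
    have hWleM : W k t ≤ M k := by
      rcases le_or_gt (W k t) 0 with h | h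
      · exact le_trans h (hMnonneg k)
      · nlinarith [mul_le_mul_of_nonneg_right hexp1 (hMnonneg k)]
    linarith [hlow, hWleM]
  -- (6) conclude: x t ⬝ᵥ x t → 0, hence x → 0
  have hfinal : Tendsto (fun t => x t ⬝ᵥ x t) atTop (nhds (0:ℝ)) := by
    rw [Metric.tendsto_atTop]
    intro δ hδ
    have hgeo : Tendsto (fun j : ℕ => r^j * M 1) atTop (nhds 0) := by
      simpa using (tendsto_pow_atTop_nhds_zero_of_lt_one hr0.le hr1).mul_const (M 1)
    obtain ⟨K, hK⟩ := (Metric.tendsto_atTop.1 hgeo) (a*δ) (by positivity)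
    refine ⟨((K:ℝ)+2)*T, ?_⟩
    intro t htK
    have htpos : (0:ℝ) < t := lt_of_lt_of_le (by positivity) htK
    set m := ⌈t/T⌉₊ with hm
    have hmK : K + 2 ≤ m := by
      have h1 : ((K:ℝ)+2) ≤ t/T := by
        rw [le_div_iff₀ hT]
        linarith [htK]
      have h2 : t/T ≤ (m:ℝ) := Nat.le_ceil _
      have : ((K+2:ℕ):ℝ) ≤ (m:ℝ) := by push_cast; linarith
      exact_mod_cast this
    set k := m - 1 with hkdef
    have hm1 : 1 ≤ m := by omega
    have hkcast : ((k:ℕ):ℝ) = (m:ℝ) - 1 := by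
      rw [hkdef]
      push_cast [Nat.cast_sub hm1]
      ring
    have hub : t ≤ ((k:ℝ)+1)*T := by
      have h2 : t/T ≤ (m:ℝ) := Nat.le_ceil _
      rw [hkcast]
      have : t/T * T ≤ (m:ℝ) * T := mul_le_mul_of_nonneg_right h2 hT.le
      rw [div_mul_cancel₀ t hT.ne'] at this
      calc t ≤ (m:ℝ)*T := this
        _ = ((m:ℝ) - 1 + 1)*T := by ring
    have hlb : (k:ℝ)*T < t := by
      have h2 : (m:ℝ) < t/T + 1 := Nat.ceil_lt_add_one (le_of_lt (div_pos htpos hT))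
      rw [hkcast]
      have h3 : (m:ℝ) - 1 < t/T := by linarith
      have : ((m:ℝ) - 1) * T < t/T * T := mul_lt_mul_of_pos_right h3 hT
      rwa [div_mul_cancel₀ t hT.ne'] at this
    have hkK : K + 1 ≤ k := by omega
    have hk1 : 1 ≤ k := by omega
    have hxk := key3 k t ⟨hlb, hub⟩
    have hMk : M k ≤ r^(k-1) * M 1 := by
      have heq : k - 1 + 1 = k := by omega
      have := hMgeo (k-1)
      rwa [heq] at this
    have hrmono : r^(k-1) ≤ r^K := pow_le_pow_of_le_one hr0.le hr1.le (by omega)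
    have hM1 : 0 ≤ M 1 := hMnonneg 1
    have hKb := hK K (le_refl K)
    rw [Real.dist_eq, sub_zero, abs_of_nonneg (by positivity)] at hKb
    have hq : x t ⬝ᵥ x t < δ := by
      have hr1' : r^(k-1) * M 1 ≤ r^K * M 1 := mul_le_mul_of_nonneg_right hrmono hM1
      have : a * (x t ⬝ᵥ x t) < a * δ := by linarith
      exact lt_of_mul_lt_mul_left this ha.le
    rw [Real.dist_eq, sub_zero, abs_of_nonneg (aux_dot_self_nonneg _)]
    exact hq
  rw [tendsto_pi_nhds]
  intro i
  have hsq : ∀ t, (x t i)^2 ≤ x t ⬝ᵥ x t := by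
    intro t
    rw [sq]
    exact Finset.single_le_sum (fun j _ => mul_self_nonneg (x t j)) (Finset.mem_univ i)
  have h2 : Tendsto (fun t => (x t i)^2) atTop (nhds (0:ℝ)) :=
    tendsto_of_tendsto_of_tendsto_of_le_of_le tendsto_const_nhds hfinal
      (fun t => sq_nonneg _) (fun t => hsq t)
  have h3 : Tendsto (fun t => |x t i|) atTop (nhds (0:ℝ)) := by
    have h := (Real.continuous_sqrt.tendsto (0:ℝ)).comp h2
    have heq : ((fun x => Real.sqrt x) ∘ fun t => x t i ^ 2) = fun t => |x t i| :=
      funext fun t => Real.sqrt_sq_eq_abs _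
    rw [heq] at h
    simpa using h
  have h4 : Tendsto (fun t => -|x t i|) atTop (nhds (0:ℝ)) := by
    simpa using h3.neg
  have h5 : Tendsto (fun t => x t i) atTop (nhds (0:ℝ)) :=
    tendsto_of_tendsto_of_tendsto_of_le_of_le h4 h3
      (fun t => neg_abs_le _) (fun t => le_abs_self _)
  simpa using h5
end

section
/- Minimum dwell-time stability (Theorem 3): Let T̄ > 0 and suppose there exist ε > 0 and a bounded, continuously differentiable matrix-valued function S : [0,T̄] × 𝒫 → Sⁿ with S(τ,θ) positive definite for every (τ,θ) ∈ [0,T̄] × 𝒫, such that (i) ∂_ρ S(T̄,θ)μ + A(θ)ᵀS(T̄,θ) + S(T̄,θ)A(θ) + εIₙ ⪯ 0 for all θ ∈ 𝒫 and all μ ∈ 𝒟ᵛ, (ii) ∂_τ S(τ,θ) + ∂_ρ S(τ,θ)μ + A(θ)ᵀS(τ,θ) + S(τ,θ)A(θ) + εIₙ ⪯ 0 for all θ ∈ 𝒫, all μ ∈ 𝒟ᵛ and all τ ∈ [0,T̄], and (iii) S(0,θ) − S(T̄,η) ⪯ 0 for all θ,η ∈ 𝒫. Then for every parameter trajectory ρ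 with minimum dwell-time T̄ and every solution x of the LPV system ẋ(t) = A(ρ(t))x(t), one has x(t) → 0 as t → ∞. -/
/-!
Statement 1 (Theorem 3 of the paper): stability of an LPV system
`ẋ(t) = A(ρ(t)) x(t)` under piecewise differentiable parameter trajectories
with minimum dwell-time `T̄`.
-/

attribute [local instance] Matrix.normedAddCommGroup Matrix.normedSpace

open Matrix Filter Set




namespace MDTAux

lemma quad_psd {n : ℕ} {M : Matrix (Fin n) (Fin n) ℝ} (h : M.PosSemidef) (v : Fin n → ℝ) :
    0 ≤ v ⬝ᵥ M *ᵥ v := by simpa using h.dotProduct_mulVec_nonneg v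

lemma dot_self_nonneg {n : ℕ} (v : Fin n → ℝ) : 0 ≤ v ⬝ᵥ v :=
  Finset.sum_nonneg fun _ _ => mul_self_nonneg _

lemma quad_abs_le {n : ℕ} (M : Matrix (Fin n) (Fin n) ℝ) (v : Fin n → ℝ) :
    |v ⬝ᵥ M *ᵥ v| ≤ (n : ℝ) * ‖M‖ * (v ⬝ᵥ v) := by
  have h1 : |v ⬝ᵥ M *ᵥ v| ≤ ∑ i, ∑ j, |v i| * (‖M‖ * |v j|) := by
    simp only [dotProduct, mulVec]
    refine (Finset.abs_sum_le_sum_abs _ _).trans (Finset.sum_le_sum fun i _ => ?_)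
    rw [abs_mul]
    refine (mul_le_mul_of_nonneg_left (Finset.abs_sum_le_sum_abs _ _) (abs_nonneg _)).trans ?_
    rw [Finset.mul_sum]
    refine Finset.sum_le_sum fun j _ => ?_
    rw [abs_mul]
    exact mul_le_mul_of_nonneg_left
      (mul_le_mul_of_nonneg_right (M.norm_entry_le_entrywise_sup_norm) (abs_nonneg _))
      (abs_nonneg _)
  have h2 : ∑ i, ∑ j, |v i| * (‖M‖ * |v j|) = ‖M‖ * (∑ i, |v i|) ^ 2 := by
    calc ∑ i, ∑ j, |v i| * (‖M‖ * |v j|) = ∑ i, |v i| * (‖M‖ * ∑ j, |v j|) := by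
          simp [Finset.mul_sum]
      _ = ‖M‖ * ((∑ i, |v i|) * (∑ j, |v j|)) := by rw [← Finset.sum_mul]; ring
      _ = ‖M‖ * (∑ i, |v i|) ^ 2 := by rw [sq]
  have h3 : (∑ i, |v i|) ^ 2 ≤ (n : ℝ) * (v ⬝ᵥ v) := by
    have := Finset.sum_mul_sq_le_sq_mul_sq Finset.univ (fun i => |v i|) (fun _ => (1 : ℝ))
    simp only [mul_one, one_pow, Finset.sum_const, Finset.card_univ, Fintype.card_fin,
      nsmul_eq_mul, sq_abs] at this
    calc (∑ i, |v i|) ^ 2 ≤ (∑ i, v i ^ 2) * (n : ℝ) := this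
      _ = (n : ℝ) * (v ⬝ᵥ v) := by rw [mul_comm]; congr 1; simp [dotProduct, sq]
  calc |v ⬝ᵥ M *ᵥ v| ≤ ‖M‖ * (∑ i, |v i|) ^ 2 := h2 ▸ h1
    _ ≤ ‖M‖ * ((n : ℝ) * (v ⬝ᵥ v)) := mul_le_mul_of_nonneg_left h3 (norm_nonneg _)
    _ = (n : ℝ) * ‖M‖ * (v ⬝ᵥ v) := by ring

lemma exists_vertex_ge {N : ℕ} (lo hi : Fin N → ℝ) {μ : Fin N → ℝ} (hμ : μ ∈ Set.Icc lo hi)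
    (φ : (Fin N → ℝ) →ₗ[ℝ] ℝ) :
    ∃ w : Fin N → ℝ, (∀ i, w i = lo i ∨ w i = hi i) ∧ φ μ ≤ φ w := by
  classical
  refine ⟨fun i => if 0 ≤ φ (fun j => if i = j then 1 else 0) then hi i else lo i, fun i => ?_, ?_⟩
  · by_cases h : 0 ≤ φ (fun j => if i = j then 1 else 0) <;> simp [h]
  · rw [LinearMap.pi_apply_eq_sum_univ φ μ, LinearMap.pi_apply_eq_sum_univ φ _]
    refine Finset.sum_le_sum fun i _ => ?_
    by_cases h : 0 ≤ φ (fun j => if i = j then 1 else 0)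
    · simp only [if_pos h, smul_eq_mul]
      exact mul_le_mul_of_nonneg_right (hμ.2 i) h
    · push_neg at h
      simp only [if_neg (not_le.mpr h), smul_eq_mul]
      exact mul_le_mul_of_nonpos_right (hμ.1 i) h.le

lemma continuousOn_quad {n : ℕ} {α : Type*} [TopologicalSpace α] {s : Set α}
    {M : α → Matrix (Fin n) (Fin n) ℝ} {v : α → Fin n → ℝ}
    (hM : ContinuousOn M s) (hv : ContinuousOn v s) :
    ContinuousOn (fun u => v u ⬝ᵥ (M u) *ᵥ v u) s := by
  simp only [dotProduct, mulVec]
  refine continuousOn_finset_sum _ fun i _ => ContinuousOn.mul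
    ((continuous_apply i).comp_continuousOn hv)
    (continuousOn_finset_sum _ fun j _ => ContinuousOn.mul ?_
      ((continuous_apply j).comp_continuousOn hv))
  exact ((continuous_apply j).comp (continuous_apply i)).comp_continuousOn hM

lemma continuous_quad_const {n : ℕ} (C : Matrix (Fin n) (Fin n) ℝ) :
    Continuous (fun v : Fin n → ℝ => v ⬝ᵥ C *ᵥ v) := by
  rw [← continuousOn_univ]
  exact continuousOn_quad continuousOn_const continuousOn_id

lemma continuous_dot_self {n : ℕ} : Continuous (fun v : Fin n → ℝ => v ⬝ᵥ v) := by
  simp only [dotProduct]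
  exact continuous_finset_sum _ fun i _ => (continuous_apply i).mul (continuous_apply i)

lemma hasDerivAt_quad {n : ℕ} {M : ℝ → Matrix (Fin n) (Fin n) ℝ} {M' : Matrix (Fin n) (Fin n) ℝ}
    {x : ℝ → Fin n → ℝ} {x' : Fin n → ℝ} {t : ℝ}
    (hM : HasDerivAt M M' t) (hx : HasDerivAt x x' t) :
    HasDerivAt (fun s => x s ⬝ᵥ (M s) *ᵥ (x s))
      (x' ⬝ᵥ M t *ᵥ x t + x t ⬝ᵥ M' *ᵥ x t + x t ⬝ᵥ M t *ᵥ x') t := by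
  have hxi : ∀ i, HasDerivAt (fun s => x s i) (x' i) t := fun i => hasDerivAt_pi.1 hx i
  have hMij : ∀ i j, HasDerivAt (fun s => M s i j) (M' i j) t := fun i j =>
    hasDerivAt_pi.1 (hasDerivAt_pi.1 hM i) j
  have key : HasDerivAt (fun s => ∑ i, x s i * ∑ j, M s i j * x s j)
      (∑ i, (x' i * ∑ j, M t i j * x t j
        + x t i * ∑ j, (M' i j * x t j + M t i j * x' j))) t :=
    HasDerivAt.fun_sum fun i _ =>
      (hxi i).mul (HasDerivAt.fun_sum fun j _ => ((hMij i j).mul (hxi j)))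
  have hfun : (fun s => x s ⬝ᵥ M s *ᵥ x s) = fun s => ∑ i, x s i * ∑ j, M s i j * x s j := by
    funext s; simp [dotProduct, mulVec]
  rw [hfun]
  convert key using 1
  simp only [dotProduct, mulVec, Finset.sum_add_distrib, Finset.mul_sum, mul_add]
  ring_nf

end MDTAux

set_option maxHeartbeats 1000000

theorem minimum_dwell_time_stability
    {n N : ℕ}
    -- the parameter box 𝒫 = [ρlo, ρhi] and the derivative box 𝒟 = [νlo, νhi]
    (ρlo ρhi νlo νhi : Fin N → ℝ)
    (hbox : ρlo ≤ ρhi) (hνbox : νlo ≤ νhi)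
    -- the system matrix, continuous (hence bounded) on the compact box 𝒫
    (A : (Fin N → ℝ) → Matrix (Fin n) (Fin n) ℝ)
    (hA : ContinuousOn A (Icc ρlo ρhi))
    -- the minimum dwell-time
    (T : ℝ) (hT : 0 < T)
    -- the Lyapunov certificate
    (ε : ℝ) (hε : 0 < ε)
    (S : ℝ → (Fin N → ℝ) → Matrix (Fin n) (Fin n) ℝ)
    (hS_c1 : ContDiff ℝ 1 (fun p : ℝ × (Fin N → ℝ) => S p.1 p.2))
    (hS_symm : ∀ τ θ, (S τ θ).IsSymm)
    (hS_pd : ∀ τ ∈ Icc (0 : ℝ) T, ∀ θ ∈ Icc ρlo ρhi, (S τ θ).PosDef)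
    -- condition (i): ∂_ρ S(T̄,θ)μ + A(θ)ᵀS(T̄,θ) + S(T̄,θ)A(θ) + εI ⪯ 0 on 𝒫 × 𝒟ᵛ
    (hflowT : ∀ θ ∈ Icc ρlo ρhi,
      ∀ μ : Fin N → ℝ, (∀ i, μ i = νlo i ∨ μ i = νhi i) →
      (-(fderiv ℝ (fun p : ℝ × (Fin N → ℝ) => S p.1 p.2) (T, θ) (0, μ)
          + (A θ)ᵀ * S T θ + S T θ * A θ
          + ε • (1 : Matrix (Fin n) (Fin n) ℝ))).PosSemidef)
    -- condition (ii): ∂_τ S + ∂_ρ S μ + AᵀS + SA + εI ⪯ 0 on [0,T̄] × 𝒫 × 𝒟ᵛ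
    (hflow : ∀ τ ∈ Icc (0 : ℝ) T, ∀ θ ∈ Icc ρlo ρhi,
      ∀ μ : Fin N → ℝ, (∀ i, μ i = νlo i ∨ μ i = νhi i) →
      (-(fderiv ℝ (fun p : ℝ × (Fin N → ℝ) => S p.1 p.2) (τ, θ) (1, 0)
          + fderiv ℝ (fun p : ℝ × (Fin N → ℝ) => S p.1 p.2) (τ, θ) (0, μ)
          + (A θ)ᵀ * S τ θ + S τ θ * A θ
          + ε • (1 : Matrix (Fin n) (Fin n) ℝ))).PosSemidef)
    -- condition (iii): S(0,θ) − S(T̄,η) ⪯ 0 on 𝒫 × 𝒫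
    (hjump : ∀ θ ∈ Icc ρlo ρhi, ∀ η ∈ Icc ρlo ρhi, (S T η - S 0 θ).PosSemidef)
    -- a parameter trajectory with minimum dwell-time T̄: jump times 0 = t₀ < t₁ < …,
    -- t_{k+1} − t_k ≥ T̄, t_k → ∞
    (tk : ℕ → ℝ) (htk0 : tk 0 = 0) (htkmono : StrictMono tk)
    (htkdwell : ∀ k : ℕ, T ≤ tk (k + 1) - tk k)
    (htk_lim : Tendsto tk atTop atTop)
    (ρ ρ' : ℝ → Fin N → ℝ)
    (hρP : ∀ t ≥ (0 : ℝ), ρ t ∈ Icc ρlo ρhi)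
    (hρleft : ∀ t > (0 : ℝ), Tendsto ρ (nhdsWithin t (Iio t)) (nhds (ρ t)))
    (hρdiff : ∀ k : ℕ, ∀ t ∈ Ioo (tk k) (tk (k + 1)),
      HasDerivAt ρ (ρ' t) t ∧ ρ' t ∈ Icc νlo νhi)
    -- a solution of the LPV system
    (x : ℝ → Fin n → ℝ)
    (hxcont : ContinuousOn x (Ici 0))
    (hxdiff : ∀ t ≥ (0 : ℝ), (∀ k : ℕ, 1 ≤ k → t ≠ tk k) →
      HasDerivWithinAt x ((A (ρ t)).mulVec (x t)) (Ici 0) t) :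
    Tendsto x atTop (nhds 0) := by
    classical
  rcases Nat.eq_zero_or_pos n with hn0 | hn
  · haveI : IsEmpty (Fin n) := ⟨fun i => by have := i.2; omega⟩
    have hx0 : x = fun _ => 0 := funext fun t => funext fun i => (IsEmpty.false i).elim
    rw [hx0]; exact tendsto_const_nhds
  set Sfun : ℝ × (Fin N → ℝ) → Matrix (Fin n) (Fin n) ℝ := fun p => S p.1 p.2 with hSfun_def
  set DS := fderiv ℝ Sfun with hDS_def
  have hSdiff : Differentiable ℝ Sfun := hS_c1.differentiable one_ne_zero
  have hScont : Continuous Sfun := hS_c1.continuous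
  have hDScont : Continuous DS := hS_c1.continuous_fderiv one_ne_zero
  have hKc : IsCompact (Icc (0:ℝ) T ×ˢ Icc ρlo ρhi) := isCompact_Icc.prod isCompact_Icc
  obtain ⟨cS, hcS⟩ := hKc.exists_bound_of_continuousOn hScont.continuousOn
  obtain ⟨cD, hcD⟩ := by
    letI : SeminormedAddCommGroup (ℝ × (Fin N → ℝ) →L[ℝ] Matrix (Fin n) (Fin n) ℝ) :=
      ContinuousLinearMap.toSeminormedAddCommGroup
    exact hKc.exists_bound_of_continuousOn (f := DS) (by exact hDScont.continuousOn)
  have hT0 : (0:ℝ) ∈ Icc (0:ℝ) T := ⟨le_refl 0, hT.le⟩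
  have hcS0 : 0 ≤ cS := le_trans (norm_nonneg _) (hcS (0, ρlo) ⟨hT0, le_refl _, hbox⟩)
  set c : ℝ := (n:ℝ) * cS + 1 with hc_def
  have hc_pos : 0 < c := by positivity
  have hc : ∀ τ ∈ Icc (0:ℝ) T, ∀ θ ∈ Icc ρlo ρhi, ∀ v : Fin n → ℝ,
      v ⬝ᵥ S τ θ *ᵥ v ≤ c * (v ⬝ᵥ v) := by
    intro τ hτ θ hθ v
    have h1 := (le_abs_self _).trans (MDTAux.quad_abs_le (S τ θ) v)
    have h2 : ‖Sfun (τ, θ)‖ ≤ cS := hcS (τ, θ) ⟨hτ, hθ⟩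
    have h2' : ‖S τ θ‖ ≤ cS := h2
    have hv := MDTAux.dot_self_nonneg v
    have h3 := mul_le_mul_of_nonneg_left h2'
      (mul_nonneg (Nat.cast_nonneg (α := ℝ) n) hv)
    nlinarith
  set lam : ℝ := ε / c with hlam_def
  have hlam_pos : 0 < lam := div_pos hε hc_pos
  have hlamc : lam * c = ε := div_mul_cancel₀ ε hc_pos.ne'
  -- lower bound on the quadratic form of S via compactness
  set Sph : Set (Fin n → ℝ) := {v | v ⬝ᵥ v = 1} with hSph_def
  have hSph_compact : IsCompact Sph := by
    apply Metric.isCompact_of_isClosed_isBounded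
    · exact isClosed_eq MDTAux.continuous_dot_self continuous_const
    · rw [Metric.isBounded_iff_subset_closedBall 0]
      refine ⟨1, fun v hv => ?_⟩
      rw [mem_closedBall_zero_iff, pi_norm_le_iff_of_nonneg zero_le_one]
      intro i
      have h1 : v i * v i ≤ 1 := by
        have h2 := Finset.single_le_sum (f := fun j => v j * v j)
          (fun j _ => mul_self_nonneg _) (Finset.mem_univ i)
        have h3 : v ⬝ᵥ v = 1 := hv
        rw [show (∑ j, v j * v j) = v ⬝ᵥ v from rfl, h3] at h2
        exact h2
      rw [Real.norm_eq_abs]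
      exact abs_le_one_iff_mul_self_le_one.2 h1
  have hv₀ : (Pi.single (⟨0, hn⟩ : Fin n) (1:ℝ)) ⬝ᵥ (Pi.single (⟨0, hn⟩ : Fin n) (1:ℝ)) = 1 := by
    simp [dotProduct, Pi.single_apply]
  obtain ⟨z₀, hz₀mem, hz₀min⟩ := (hKc.prod hSph_compact).exists_isMinOn
    ⟨((0, ρlo), Pi.single ⟨0, hn⟩ 1), ⟨hT0, le_refl _, hbox⟩, hv₀⟩
    (MDTAux.continuousOn_quad ((hScont.comp continuous_fst).continuousOn)
      continuous_snd.continuousOn)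
  set m : ℝ := z₀.2 ⬝ᵥ Sfun z₀.1 *ᵥ z₀.2 with hm_def
  have hm_pos : 0 < m := by
    have hz2 : z₀.2 ⬝ᵥ z₀.2 = 1 := hz₀mem.2
    have hz2ne : z₀.2 ≠ 0 := by
      intro h; rw [h] at hz2; simp [dotProduct] at hz2
    have := (hS_pd z₀.1.1 hz₀mem.1.1 z₀.1.2 hz₀mem.1.2).dotProduct_mulVec_pos hz2ne
    simpa using this
  have hm : ∀ τ ∈ Icc (0:ℝ) T, ∀ θ ∈ Icc ρlo ρhi, ∀ v : Fin n → ℝ,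
      m * (v ⬝ᵥ v) ≤ v ⬝ᵥ S τ θ *ᵥ v := by
    intro τ hτ θ hθ v
    rcases eq_or_ne v 0 with rfl | hv
    · simp [dotProduct]
    · have hvv : 0 < v ⬝ᵥ v := by
        rcases Function.ne_iff.1 hv with ⟨i, hi⟩
        have h1 : 0 < v i * v i := mul_self_pos.2 (by simpa using hi)
        refine lt_of_lt_of_le h1 ?_
        exact Finset.single_le_sum (f := fun j => v j * v j)
          (fun j _ => mul_self_nonneg _) (Finset.mem_univ i)
      set r := Real.sqrt (v ⬝ᵥ v) with hr_def
      have hr_pos : 0 < r := Real.sqrt_pos.2 hvv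
      have hrr : r * r = v ⬝ᵥ v := Real.mul_self_sqrt hvv.le
      have hw : (r⁻¹ • v) ⬝ᵥ (r⁻¹ • v) = 1 := by
        rw [smul_dotProduct, dotProduct_smul, smul_eq_mul, smul_eq_mul, ← hrr]
        field_simp
      have hmem : (((τ, θ), r⁻¹ • v) : (ℝ × (Fin N → ℝ)) × (Fin n → ℝ))
          ∈ (Icc (0:ℝ) T ×ˢ Icc ρlo ρhi) ×ˢ Sph := ⟨⟨hτ, hθ⟩, hw⟩
      have hmin := hz₀min hmem
      have hq : (r⁻¹ • v) ⬝ᵥ Sfun (τ, θ) *ᵥ (r⁻¹ • v)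
          = r⁻¹ * (r⁻¹ * (v ⬝ᵥ S τ θ *ᵥ v)) := by
        rw [smul_dotProduct, mulVec_smul, dotProduct_smul]
        simp [smul_eq_mul, hSfun_def]
      have hmin' : m ≤ r⁻¹ * (r⁻¹ * (v ⬝ᵥ S τ θ *ᵥ v)) := by
        rw [← hq]; exact hmin
      have h5 := mul_le_mul_of_nonneg_left hmin' (mul_pos hr_pos hr_pos).le
      have h6 : r * r * (r⁻¹ * (r⁻¹ * (v ⬝ᵥ S τ θ *ᵥ v))) = v ⬝ᵥ S τ θ *ᵥ v := by
        field_simp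
      rw [h6] at h5
      rw [← hrr]
      nlinarith
  -- linear maps μ ↦ vᵀ (∂ρS μ) v
  have hDlin : ∀ (p : ℝ × (Fin N → ℝ)) (v : Fin n → ℝ), ∃ φ : (Fin N → ℝ) →ₗ[ℝ] ℝ,
      ∀ w, φ w = v ⬝ᵥ (DS p ((0:ℝ), w)) *ᵥ v := by
    intro p v
    refine ⟨{ toFun := fun w => v ⬝ᵥ (DS p ((0:ℝ), w)) *ᵥ v
              map_add' := fun a b => ?_
              map_smul' := fun r a => ?_ }, fun w => rfl⟩
    · have h : ((0:ℝ), a + b) = ((0:ℝ), a) + ((0:ℝ), b) := by simp [Prod.ext_iff]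
      show v ⬝ᵥ (DS p ((0:ℝ), a + b)) *ᵥ v
        = v ⬝ᵥ (DS p ((0:ℝ), a)) *ᵥ v + v ⬝ᵥ (DS p ((0:ℝ), b)) *ᵥ v
      rw [h, map_add, add_mulVec, dotProduct_add]
    · have h : ((0:ℝ), r • a) = r • ((0:ℝ), a) := by simp [Prod.ext_iff]
      show v ⬝ᵥ (DS p ((0:ℝ), r • a)) *ᵥ v = (RingHom.id ℝ) r • (v ⬝ᵥ (DS p ((0:ℝ), a)) *ᵥ v)
      rw [h, _root_.map_smul, smul_mulVec, dotProduct_smul, smul_eq_mul, RingHom.id_apply,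
        smul_eq_mul]
  have hflow' : ∀ τ ∈ Icc (0:ℝ) T, ∀ θ ∈ Icc ρlo ρhi, ∀ μ ∈ Icc νlo νhi, ∀ v : Fin n → ℝ,
      v ⬝ᵥ (DS (τ, θ) (1, μ)) *ᵥ v + v ⬝ᵥ ((A θ)ᵀ * S τ θ) *ᵥ v + v ⬝ᵥ (S τ θ * A θ) *ᵥ v
        + ε * (v ⬝ᵥ v) ≤ 0 := by
    intro τ hτ θ hθ μ hμ v
    obtain ⟨φ, hφ⟩ := hDlin (τ, θ) v
    obtain ⟨w, hw_vert, hw_ge⟩ := MDTAux.exists_vertex_ge νlo νhi hμ φ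
    have hkey := MDTAux.quad_psd (hflow τ hτ θ hθ w hw_vert) v
    rw [neg_mulVec, dotProduct_neg, neg_nonneg] at hkey
    simp only [add_mulVec, dotProduct_add, smul_mulVec, dotProduct_smul, smul_eq_mul,
      one_mulVec] at hkey
    have hsum : DS (τ, θ) (1, μ) = DS (τ, θ) ((1:ℝ), 0) + DS (τ, θ) ((0:ℝ), μ) := by
      rw [← map_add]; congr 1; simp [Prod.ext_iff]
    rw [hsum, add_mulVec, dotProduct_add]
    have h1 : v ⬝ᵥ DS (τ, θ) ((0:ℝ), μ) *ᵥ v ≤ v ⬝ᵥ DS (τ, θ) ((0:ℝ), w) *ᵥ v := by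
      rw [← hφ μ, ← hφ w]; exact hw_ge
    linarith
  have hflowT' : ∀ θ ∈ Icc ρlo ρhi, ∀ μ ∈ Icc νlo νhi, ∀ v : Fin n → ℝ,
      v ⬝ᵥ (DS (T, θ) ((0:ℝ), μ)) *ᵥ v + v ⬝ᵥ ((A θ)ᵀ * S T θ) *ᵥ v + v ⬝ᵥ (S T θ * A θ) *ᵥ v
        + ε * (v ⬝ᵥ v) ≤ 0 := by
    intro θ hθ μ hμ v
    obtain ⟨φ, hφ⟩ := hDlin (T, θ) v
    obtain ⟨w, hw_vert, hw_ge⟩ := MDTAux.exists_vertex_ge νlo νhi hμ φ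
    have hkey := MDTAux.quad_psd (hflowT θ hθ w hw_vert) v
    rw [neg_mulVec, dotProduct_neg, neg_nonneg] at hkey
    simp only [add_mulVec, dotProduct_add, smul_mulVec, dotProduct_smul, smul_eq_mul,
      one_mulVec] at hkey
    have h1 : v ⬝ᵥ DS (T, θ) ((0:ℝ), μ) *ᵥ v ≤ v ⬝ᵥ DS (T, θ) ((0:ℝ), w) *ᵥ v := by
      rw [← hφ μ, ← hφ w]; exact hw_ge
    linarith
  -- the key decay estimate on one interval
  have interval : ∀ a b : ℝ, 0 ≤ a → a + T ≤ b →
      (∀ u ∈ Ioo a b, HasDerivAt ρ (ρ' u) u ∧ ρ' u ∈ Icc νlo νhi) →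
      (∀ u ∈ Ioo a b, HasDerivAt x (A (ρ u) *ᵥ x u) u) →
      ∀ t ∈ Ioc a b,
        Real.exp (lam * t) * (x t ⬝ᵥ S (min (t - a) T) (ρ t) *ᵥ x t)
          ≤ Real.exp (lam * a) * (x a ⬝ᵥ S T (ρ a) *ᵥ x a) := by
    intro a b ha0 hab hρd hxd t ht
    have hρcont : ContinuousOn ρ (Ioc a b) := by
      intro u hu
      rcases eq_or_lt_of_le hu.2 with heq | hub
      · rw [heq]
        have h1 : Tendsto ρ (nhdsWithin b (Iio b)) (nhds (ρ b)) :=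
          hρleft b (by linarith : (0:ℝ) < b)
        have h2 : ContinuousWithinAt ρ (Iic b) b := by
          rw [ContinuousWithinAt, ← Iio_insert, nhdsWithin_insert]
          exact tendsto_sup.2 ⟨tendsto_pure_nhds ρ b, h1⟩
        exact h2.mono Ioc_subset_Iic_self
      · exact ((hρd u ⟨hu.1, hub⟩).1.continuousAt).continuousWithinAt
    have KD1 : ∀ s t', a < s → s ≤ t' → t' ≤ a + T →
        Real.exp (lam * t') * (x t' ⬝ᵥ S (t' - a) (ρ t') *ᵥ x t')
          ≤ Real.exp (lam * s) * (x s ⬝ᵥ S (s - a) (ρ s) *ᵥ x s) := by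
      intro s t' hs hst ht'
      have hsub1 : Icc s t' ⊆ Ioc a b := fun u hu =>
        ⟨lt_of_lt_of_le hs hu.1, le_trans hu.2 (le_trans ht' hab)⟩
      have hsub2 : Icc s t' ⊆ Ici (0:ℝ) := fun u hu => le_trans (le_trans ha0 hs.le) hu.1
      have hder : ∀ u ∈ Ioo s t', HasDerivAt
          (fun u => Real.exp (lam * u) * (x u ⬝ᵥ S (u - a) (ρ u) *ᵥ x u))
          (Real.exp (lam * u) * lam * (x u ⬝ᵥ S (u - a) (ρ u) *ᵥ x u)
            + Real.exp (lam * u) * ((A (ρ u) *ᵥ x u) ⬝ᵥ S (u - a) (ρ u) *ᵥ x u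
              + x u ⬝ᵥ (DS (u - a, ρ u) (1, ρ' u)) *ᵥ x u
              + x u ⬝ᵥ S (u - a) (ρ u) *ᵥ (A (ρ u) *ᵥ x u))) u := by
        intro u hu
        have huab : u ∈ Ioo a b :=
          ⟨lt_trans hs hu.1, lt_of_lt_of_le (lt_of_lt_of_le hu.2 ht') hab⟩
        have hcurve : HasDerivAt (fun u : ℝ => ((u - a : ℝ), ρ u)) ((1:ℝ), ρ' u) u :=
          HasDerivAt.prodMk (by simpa using (hasDerivAt_id u).sub_const a) (hρd u huab).1
        have hM : HasDerivAt (fun u : ℝ => S (u - a) (ρ u))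
            (DS (u - a, ρ u) ((1:ℝ), ρ' u)) u :=
          by exact (hSdiff ((u - a : ℝ), ρ u)).hasFDerivAt.comp_hasDerivAt u hcurve
        have hexp : HasDerivAt (fun u : ℝ => Real.exp (lam * u))
            (Real.exp (lam * u) * lam) u := by
          simpa using ((hasDerivAt_id u).const_mul lam).exp
        have hquad := MDTAux.hasDerivAt_quad hM (hxd u huab)
        exact hexp.mul hquad
      have hanti : AntitoneOn
          (fun u => Real.exp (lam * u) * (x u ⬝ᵥ S (u - a) (ρ u) *ᵥ x u)) (Icc s t') := by
        apply antitoneOn_of_deriv_nonpos (convex_Icc s t')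
        · apply ContinuousOn.mul
          · exact (Real.continuous_exp.comp (continuous_const.mul continuous_id)).continuousOn
          · apply MDTAux.continuousOn_quad
            · exact hScont.comp_continuousOn
                (((continuous_id.sub continuous_const).continuousOn).prodMk (hρcont.mono hsub1))
            · exact hxcont.mono hsub2
        · intro u hu
          rw [interior_Icc] at hu
          exact ((hder u hu).differentiableAt).differentiableWithinAt
        · intro u hu
          rw [interior_Icc] at hu
          rw [(hder u hu).deriv]
          have huab : u ∈ Ioo a b :=
            ⟨lt_trans hs hu.1, lt_of_lt_of_le (lt_of_lt_of_le hu.2 ht') hab⟩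
          have hu0 : 0 < u := lt_of_le_of_lt ha0 huab.1
          have hτ : u - a ∈ Icc (0:ℝ) T := ⟨by linarith [huab.1], by linarith [hu.2]⟩
          have hθ : ρ u ∈ Icc ρlo ρhi := hρP u hu0.le
          have hμ : ρ' u ∈ Icc νlo νhi := (hρd u huab).2
          have key := hflow' (u - a) hτ (ρ u) hθ (ρ' u) hμ (x u)
          have e1 : x u ⬝ᵥ ((A (ρ u))ᵀ * S (u - a) (ρ u)) *ᵥ x u
              = (A (ρ u) *ᵥ x u) ⬝ᵥ S (u - a) (ρ u) *ᵥ x u := by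
            rw [← mulVec_mulVec, dotProduct_mulVec, vecMul_transpose]
          have e2 : x u ⬝ᵥ (S (u - a) (ρ u) * A (ρ u)) *ᵥ x u
              = x u ⬝ᵥ S (u - a) (ρ u) *ᵥ (A (ρ u) *ᵥ x u) := by
            rw [← mulVec_mulVec]
          rw [e1, e2] at key
          have hW := hc (u - a) hτ (ρ u) hθ (x u)
          have hlamW : lam * (x u ⬝ᵥ S (u - a) (ρ u) *ᵥ x u) ≤ ε * (x u ⬝ᵥ x u) := by
            calc lam * (x u ⬝ᵥ S (u - a) (ρ u) *ᵥ x u) ≤ lam * (c * (x u ⬝ᵥ x u)) :=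
                  mul_le_mul_of_nonneg_left hW hlam_pos.le
              _ = ε * (x u ⬝ᵥ x u) := by rw [← mul_assoc, hlamc]
          have hfinal : lam * (x u ⬝ᵥ S (u - a) (ρ u) *ᵥ x u)
              + ((A (ρ u) *ᵥ x u) ⬝ᵥ S (u - a) (ρ u) *ᵥ x u
                + x u ⬝ᵥ (DS (u - a, ρ u) (1, ρ' u)) *ᵥ x u
                + x u ⬝ᵥ S (u - a) (ρ u) *ᵥ (A (ρ u) *ᵥ x u)) ≤ 0 := by linarith
          nlinarith [mul_le_mul_of_nonneg_left hfinal (Real.exp_pos (lam * u)).le]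
      exact hanti ⟨le_rfl, hst⟩ ⟨hst, le_rfl⟩ hst
    have KD2 : ∀ s t', a + T ≤ s → s ≤ t' → t' ≤ b →
        Real.exp (lam * t') * (x t' ⬝ᵥ S T (ρ t') *ᵥ x t')
          ≤ Real.exp (lam * s) * (x s ⬝ᵥ S T (ρ s) *ᵥ x s) := by
      intro s t' hs hst ht'
      have has : a < s := by linarith
      have hsub1 : Icc s t' ⊆ Ioc a b := fun u hu =>
        ⟨lt_of_lt_of_le has hu.1, le_trans hu.2 ht'⟩
      have hsub2 : Icc s t' ⊆ Ici (0:ℝ) := fun u hu => le_trans (le_trans ha0 has.le) hu.1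
      have hder : ∀ u ∈ Ioo s t', HasDerivAt
          (fun u => Real.exp (lam * u) * (x u ⬝ᵥ S T (ρ u) *ᵥ x u))
          (Real.exp (lam * u) * lam * (x u ⬝ᵥ S T (ρ u) *ᵥ x u)
            + Real.exp (lam * u) * ((A (ρ u) *ᵥ x u) ⬝ᵥ S T (ρ u) *ᵥ x u
              + x u ⬝ᵥ (DS (T, ρ u) ((0:ℝ), ρ' u)) *ᵥ x u
              + x u ⬝ᵥ S T (ρ u) *ᵥ (A (ρ u) *ᵥ x u))) u := by
        intro u hu
        have huab : u ∈ Ioo a b := ⟨lt_trans has hu.1, lt_of_lt_of_le hu.2 ht'⟩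
        have hcurve : HasDerivAt (fun u : ℝ => ((T : ℝ), ρ u)) ((0:ℝ), ρ' u) u :=
          HasDerivAt.prodMk (hasDerivAt_const u T) (hρd u huab).1
        have hM : HasDerivAt (fun u : ℝ => S T (ρ u))
            (DS (T, ρ u) ((0:ℝ), ρ' u)) u :=
          by exact (hSdiff ((T : ℝ), ρ u)).hasFDerivAt.comp_hasDerivAt u hcurve
        have hexp : HasDerivAt (fun u : ℝ => Real.exp (lam * u))
            (Real.exp (lam * u) * lam) u := by
          simpa using ((hasDerivAt_id u).const_mul lam).exp
        have hquad := MDTAux.hasDerivAt_quad hM (hxd u huab)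
        exact hexp.mul hquad
      have hanti : AntitoneOn
          (fun u => Real.exp (lam * u) * (x u ⬝ᵥ S T (ρ u) *ᵥ x u)) (Icc s t') := by
        apply antitoneOn_of_deriv_nonpos (convex_Icc s t')
        · apply ContinuousOn.mul
          · exact (Real.continuous_exp.comp (continuous_const.mul continuous_id)).continuousOn
          · apply MDTAux.continuousOn_quad
            · exact hScont.comp_continuousOn
                ((continuousOn_const).prodMk (hρcont.mono hsub1))
            · exact hxcont.mono hsub2
        · intro u hu
          rw [interior_Icc] at hu
          exact ((hder u hu).differentiableAt).differentiableWithinAt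
        · intro u hu
          rw [interior_Icc] at hu
          rw [(hder u hu).deriv]
          have huab : u ∈ Ioo a b := ⟨lt_trans has hu.1, lt_of_lt_of_le hu.2 ht'⟩
          have hu0 : 0 < u := lt_of_le_of_lt ha0 huab.1
          have hτ : (T:ℝ) ∈ Icc (0:ℝ) T := ⟨hT.le, le_rfl⟩
          have hθ : ρ u ∈ Icc ρlo ρhi := hρP u hu0.le
          have hμ : ρ' u ∈ Icc νlo νhi := (hρd u huab).2
          have key := hflowT' (ρ u) hθ (ρ' u) hμ (x u)
          have e1 : x u ⬝ᵥ ((A (ρ u))ᵀ * S T (ρ u)) *ᵥ x u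
              = (A (ρ u) *ᵥ x u) ⬝ᵥ S T (ρ u) *ᵥ x u := by
            rw [← mulVec_mulVec, dotProduct_mulVec, vecMul_transpose]
          have e2 : x u ⬝ᵥ (S T (ρ u) * A (ρ u)) *ᵥ x u
              = x u ⬝ᵥ S T (ρ u) *ᵥ (A (ρ u) *ᵥ x u) := by
            rw [← mulVec_mulVec]
          rw [e1, e2] at key
          have hW := hc T hτ (ρ u) hθ (x u)
          have hlamW : lam * (x u ⬝ᵥ S T (ρ u) *ᵥ x u) ≤ ε * (x u ⬝ᵥ x u) := by
            calc lam * (x u ⬝ᵥ S T (ρ u) *ᵥ x u) ≤ lam * (c * (x u ⬝ᵥ x u)) :=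
                  mul_le_mul_of_nonneg_left hW hlam_pos.le
              _ = ε * (x u ⬝ᵥ x u) := by rw [← mul_assoc, hlamc]
          have hfinal : lam * (x u ⬝ᵥ S T (ρ u) *ᵥ x u)
              + ((A (ρ u) *ᵥ x u) ⬝ᵥ S T (ρ u) *ᵥ x u
                + x u ⬝ᵥ (DS (T, ρ u) ((0:ℝ), ρ' u)) *ᵥ x u
                + x u ⬝ᵥ S T (ρ u) *ᵥ (A (ρ u) *ᵥ x u)) ≤ 0 := by linarith
          nlinarith [mul_le_mul_of_nonneg_left hfinal (Real.exp_pos (lam * u)).le]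
      exact hanti ⟨le_rfl, hst⟩ ⟨hst, le_rfl⟩ hst
    have KD : ∀ s, a < s → s ≤ t →
        Real.exp (lam * t) * (x t ⬝ᵥ S (min (t - a) T) (ρ t) *ᵥ x t)
          ≤ Real.exp (lam * s) * (x s ⬝ᵥ S (min (s - a) T) (ρ s) *ᵥ x s) := by
      intro s hs hst
      rcases le_or_gt t (a + T) with h1 | h1
      · rw [min_eq_left (by linarith : t - a ≤ T), min_eq_left (by linarith : s - a ≤ T)]
        exact KD1 s t hs hst h1
      rcases le_or_gt (a + T) s with h2 | h2
      · rw [min_eq_right (by linarith : T ≤ t - a), min_eq_right (by linarith : T ≤ s - a)]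
        exact KD2 s t h2 hst ht.2
      · rw [min_eq_right (by linarith : T ≤ t - a), min_eq_left (by linarith : s - a ≤ T)]
        have hmid1 := KD1 s (a + T) hs (by linarith) le_rfl
        have hmid2 := KD2 (a + T) t le_rfl (by linarith) ht.2
        rw [add_sub_cancel_left] at hmid1
        exact hmid2.trans hmid1
    set t1 := min t (a + T) with ht1_def
    have ht1a : a < t1 := lt_min ht.1 (by linarith)
    haveI hNB : (nhdsWithin a (Ioc a t1)).NeBot := by
      rw [← mem_closure_iff_nhdsWithin_neBot, closure_Ioc (ne_of_lt ht1a)]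
      exact ⟨le_rfl, ht1a.le⟩
    have hstep : ∀ s ∈ Ioc a t1,
        Real.exp (lam * t) * (x t ⬝ᵥ S (min (t - a) T) (ρ t) *ᵥ x t)
          ≤ Real.exp (lam * s) * ((x s ⬝ᵥ S T (ρ a) *ᵥ x s)
              + (n:ℝ) * (cD * (s - a)) * (x s ⬝ᵥ x s)) := by
      intro s hs
      have hst : s ≤ t := le_trans hs.2 (min_le_left _ _)
      refine (KD s hs.1 hst).trans ?_
      refine mul_le_mul_of_nonneg_left ?_ (Real.exp_pos _).le
      have hsT : s - a ≤ T := by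
        have h5 := le_trans hs.2 (min_le_right t (a + T)); linarith
      rw [min_eq_left hsT]
      have hs0 : 0 ≤ s := le_trans ha0 hs.1.le
      have hρs : ρ s ∈ Icc ρlo ρhi := hρP s hs0
      have hρa : ρ a ∈ Icc ρlo ρhi := hρP a ha0
      have hjump' : x s ⬝ᵥ S 0 (ρ s) *ᵥ x s ≤ x s ⬝ᵥ S T (ρ a) *ᵥ x s := by
        have h3 := MDTAux.quad_psd (hjump (ρ s) hρs (ρ a) hρa) (x s)
        rw [sub_mulVec, dotProduct_sub] at h3; linarith
      have hnormdiff : ‖S (s - a) (ρ s) - S 0 (ρ s)‖ ≤ cD * (s - a) := by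
        have hconv : Convex ℝ (Icc (0:ℝ) T ×ˢ Icc ρlo ρhi) :=
          (convex_Icc _ _).prod (convex_Icc _ _)
        have hmem1 : ((s - a : ℝ), ρ s) ∈ Icc (0:ℝ) T ×ˢ Icc ρlo ρhi :=
          ⟨⟨show (0:ℝ) ≤ s - a by linarith [hs.1], show s - a ≤ T from hsT⟩, hρs⟩
        have hmem2 : ((0:ℝ), ρ s) ∈ Icc (0:ℝ) T ×ˢ Icc ρlo ρhi := ⟨⟨le_rfl, hT.le⟩, hρs⟩
        have h4 := Convex.norm_image_sub_le_of_norm_fderiv_le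
          (fun p _ => hSdiff p) hcD hconv hmem2 hmem1
        have h5' : (((s - a : ℝ), ρ s) : ℝ × (Fin N → ℝ)) - ((0:ℝ), ρ s)
            = ((s - a : ℝ), (0 : Fin N → ℝ)) := by
          simp [Prod.ext_iff]
        have h5 : ‖(((s - a : ℝ), ρ s) : ℝ × (Fin N → ℝ)) - ((0:ℝ), ρ s)‖ = s - a := by
          rw [h5', Prod.norm_def]
          simp only [norm_zero, Real.norm_eq_abs]
          rw [max_eq_left (abs_nonneg _),
            abs_of_nonneg (by linarith [hs.1] : (0:ℝ) ≤ s - a)]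
        calc ‖S (s - a) (ρ s) - S 0 (ρ s)‖
            = ‖Sfun ((s - a : ℝ), ρ s) - Sfun ((0:ℝ), ρ s)‖ := rfl
          _ ≤ cD * ‖(((s - a : ℝ), ρ s) : ℝ × (Fin N → ℝ)) - ((0:ℝ), ρ s)‖ := h4
          _ = cD * (s - a) := by rw [h5]
      have hquaddiff := (le_abs_self _).trans
        (MDTAux.quad_abs_le (S (s - a) (ρ s) - S 0 (ρ s)) (x s))
      have hxx := MDTAux.dot_self_nonneg (x s)
      have h6 : (n:ℝ) * ‖S (s - a) (ρ s) - S 0 (ρ s)‖ * (x s ⬝ᵥ x s)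
          ≤ (n:ℝ) * (cD * (s - a)) * (x s ⬝ᵥ x s) :=
        mul_le_mul_of_nonneg_right
          (mul_le_mul_of_nonneg_left hnormdiff (Nat.cast_nonneg n)) hxx
      have hsplit : x s ⬝ᵥ S (s - a) (ρ s) *ᵥ x s
          = x s ⬝ᵥ S 0 (ρ s) *ᵥ x s + x s ⬝ᵥ (S (s - a) (ρ s) - S 0 (ρ s)) *ᵥ x s := by
        rw [sub_mulVec, dotProduct_sub]; ring
      rw [hsplit]
      linarith
    have hlim : Tendsto (fun s => Real.exp (lam * s) * ((x s ⬝ᵥ S T (ρ a) *ᵥ x s)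
        + (n:ℝ) * (cD * (s - a)) * (x s ⬝ᵥ x s))) (nhdsWithin a (Ioc a t1))
        (nhds (Real.exp (lam * a) * (x a ⬝ᵥ S T (ρ a) *ᵥ x a))) := by
      have hxa : ContinuousWithinAt x (Ioc a t1) a :=
        (hxcont a (mem_Ici.2 ha0)).mono (fun u hu => le_trans ha0 hu.1.le)
      have h1 : ContinuousWithinAt (fun s : ℝ => Real.exp (lam * s)) (Ioc a t1) a :=
        (Real.continuous_exp.comp (continuous_const.mul continuous_id)).continuousWithinAt
      have h2 : ContinuousWithinAt (fun s => x s ⬝ᵥ S T (ρ a) *ᵥ x s) (Ioc a t1) a :=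
        ((MDTAux.continuous_quad_const (S T (ρ a))).continuousAt).comp_continuousWithinAt hxa
      have h3 : ContinuousWithinAt
          (fun s => (n:ℝ) * (cD * (s - a)) * (x s ⬝ᵥ x s)) (Ioc a t1) a :=
        ((continuous_const.mul
          (continuous_const.mul (continuous_id.sub continuous_const))).continuousWithinAt).mul
          ((MDTAux.continuous_dot_self.continuousAt).comp_continuousWithinAt hxa)
      have h4 := h1.mul (h2.add h3)
      have h5 : Real.exp (lam * a) * ((x a ⬝ᵥ S T (ρ a) *ᵥ x a)
          + (n:ℝ) * (cD * (a - a)) * (x a ⬝ᵥ x a))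
          = Real.exp (lam * a) * (x a ⬝ᵥ S T (ρ a) *ᵥ x a) := by simp
      have h6 : Tendsto (fun s => Real.exp (lam * s) * ((x s ⬝ᵥ S T (ρ a) *ᵥ x s)
          + (n:ℝ) * (cD * (s - a)) * (x s ⬝ᵥ x s))) (nhdsWithin a (Ioc a t1))
          (nhds (Real.exp (lam * a) * ((x a ⬝ᵥ S T (ρ a) *ᵥ x a)
          + (n:ℝ) * (cD * (a - a)) * (x a ⬝ᵥ x a)))) := h4
      rw [h5] at h6
      exact h6
    exact ge_of_tendsto hlim (eventually_nhdsWithin_of_forall hstep)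
  have decay : ∀ k : ℕ, ∀ t ∈ Ioc (tk k) (tk (k+1)),
      Real.exp (lam * t) * (x t ⬝ᵥ S (min (t - tk k) T) (ρ t) *ᵥ x t)
        ≤ Real.exp (lam * tk k) * (x (tk k) ⬝ᵥ S T (ρ (tk k)) *ᵥ x (tk k)) := by
    intro k
    have ha0 : 0 ≤ tk k := htk0 ▸ htkmono.monotone (Nat.zero_le k)
    have hab : tk k + T ≤ tk (k+1) := by have := htkdwell k; linarith
    refine interval (tk k) (tk (k+1)) ha0 hab (hρdiff k) ?_
    intro u hu
    have hu0 : 0 < u := lt_of_le_of_lt ha0 hu.1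
    have hne : ∀ j : ℕ, 1 ≤ j → u ≠ tk j := by
      intro j hj hne
      rcases le_or_gt j k with h | h
      · have h2 : tk j ≤ tk k := htkmono.monotone h
        rw [← hne] at h2; exact absurd hu.1 (not_lt.2 h2)
      · have h2 : tk (k+1) ≤ tk j := htkmono.monotone (Nat.succ_le_of_lt h)
        rw [← hne] at h2; exact absurd hu.2 (not_lt.2 h2)
    exact (hxdiff u hu0.le hne).hasDerivAt (Ici_mem_nhds hu0)
  have main : ∀ k : ℕ, ∀ t ∈ Ioc (tk k) (tk (k+1)),
      Real.exp (lam * t) * (x t ⬝ᵥ S (min (t - tk k) T) (ρ t) *ᵥ x t)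
        ≤ Real.exp (lam * tk 0) * (x (tk 0) ⬝ᵥ S T (ρ (tk 0)) *ᵥ x (tk 0)) := by
    intro k
    induction k with
    | zero => exact decay 0
    | succ k ih =>
      intro t ht
      refine (decay (k+1) t ht).trans ?_
      have h1 : tk (k+1) ∈ Ioc (tk k) (tk (k+1)) := ⟨htkmono (Nat.lt_succ_self k), le_rfl⟩
      have h2 := ih (tk (k+1)) h1
      rw [min_eq_right (by linarith [htkdwell k] : T ≤ tk (k+1) - tk k)] at h2
      exact h2
  rw [tendsto_zero_iff_norm_tendsto_zero]
  set G0 : ℝ := Real.exp (lam * tk 0) * (x (tk 0) ⬝ᵥ S T (ρ (tk 0)) *ᵥ x (tk 0)) with hG0_def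
  have hbound : ∀ t : ℝ, 0 < t → ‖x t‖ ≤ Real.sqrt ((G0 / m) * Real.exp (-(lam * t))) := by
    intro t ht0
    obtain ⟨K, hK⟩ := (htk_lim.eventually_ge_atTop t).exists
    have hexk : ∃ j, t ≤ tk j := ⟨K, hK⟩
    have hK0pos : 0 < Nat.find hexk := by
      rcases Nat.eq_zero_or_pos (Nat.find hexk) with h | h
      · exfalso
        have h2 := Nat.find_spec hexk
        rw [h, htk0] at h2; linarith
      · exact h
    set k := Nat.find hexk - 1 with hk_def
    have hk1 : k + 1 = Nat.find hexk := Nat.succ_pred_eq_of_pos hK0pos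
    have h1 : tk k < t := by
      have h2 := Nat.find_min hexk (show k < Nat.find hexk by omega)
      push_neg at h2
      exact h2
    have h2 : t ≤ tk (k+1) := by rw [hk1]; exact Nat.find_spec hexk
    have hmain := main k t ⟨h1, h2⟩
    have hτmem : min (t - tk k) T ∈ Icc (0:ℝ) T :=
      ⟨le_min (by linarith) hT.le, min_le_right _ _⟩
    have hmQ := hm _ hτmem _ (hρP t ht0.le) (x t)
    have hE := Real.exp_pos (lam * t)
    have hQle : x t ⬝ᵥ S (min (t - tk k) T) (ρ t) *ᵥ x t ≤ G0 / Real.exp (lam * t) := by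
      rw [le_div_iff₀ hE, mul_comm]
      exact hmain
    have h3 : m * (x t ⬝ᵥ x t) ≤ G0 / Real.exp (lam * t) := le_trans hmQ hQle
    have hxx : x t ⬝ᵥ x t ≤ (G0 / m) * Real.exp (-(lam * t)) := by
      have h3' : x t ⬝ᵥ x t ≤ (G0 / Real.exp (lam * t)) / m := (le_div_iff₀' hm_pos).2 h3
      calc x t ⬝ᵥ x t ≤ (G0 / Real.exp (lam * t)) / m := h3'
        _ = (G0 / m) * Real.exp (-(lam * t)) := by rw [Real.exp_neg]; ring
    have h4 : ‖x t‖ ≤ Real.sqrt (x t ⬝ᵥ x t) := by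
      rw [pi_norm_le_iff_of_nonneg (Real.sqrt_nonneg _)]
      intro i
      rw [Real.norm_eq_abs, ← Real.sqrt_sq_eq_abs]
      apply Real.sqrt_le_sqrt
      have h5 := Finset.single_le_sum (f := fun j => x t j * x t j)
        (fun j _ => mul_self_nonneg _) (Finset.mem_univ i)
      simpa [sq, dotProduct] using h5
    exact h4.trans (Real.sqrt_le_sqrt hxx)
  apply squeeze_zero' (Filter.Eventually.of_forall fun t => norm_nonneg _)
    ((eventually_gt_atTop 0).mono fun t ht => hbound t ht)
  have h6 : Tendsto (fun t : ℝ => Real.exp (-(lam * t))) atTop (nhds 0) :=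
    Real.tendsto_exp_neg_atTop_nhds_zero.comp (Tendsto.const_mul_atTop hlam_pos tendsto_id)
  have h7 : Tendsto (fun t : ℝ => (G0 / m) * Real.exp (-(lam * t))) atTop (nhds 0) := by
    simpa using h6.const_mul (G0 / m)
  have h8 := (Real.continuous_sqrt.tendsto 0).comp h7
  simpa [Function.comp_def, Real.sqrt_zero] using h8
end

section
/- If a continuous matrix-valued function S : [0,δ] × 𝒫 → Sⁿ (δ > 0, 𝒫 ⊂ ℝᴺ nonempty) satisfies S(0,θ) − S(ε,η) ⪯ 0 for all θ, η ∈ 𝒫 and all ε ∈ (0,δ], then S(0,·) is constant on 𝒫, i.e., S(0,θ) = S(0,η) for all θ, η ∈ 𝒫. -/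
/-!
Statement 2: if a continuous symmetric-matrix-valued function `S` on
`[0,δ] × 𝒫` satisfies `S(0,θ) − S(ε,η) ⪯ 0` for all `θ, η ∈ 𝒫` and all
`ε ∈ (0,δ]`, then `S(0,·)` is constant on `𝒫`.
-/

attribute [local instance] Matrix.normedAddCommGroup Matrix.normedSpace

open Matrix Set
open Topology Filter

private lemma psd_neg_psd_eq_zero {n : ℕ} {A : Matrix (Fin n) (Fin n) ℝ}
    (h1 : A.PosSemidef) (h2 : (-A).PosSemidef) : A = 0 := by
  have hz : ∀ x : Fin n → ℝ, A *ᵥ x = 0 := by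
    intro x
    rw [← h1.dotProduct_mulVec_zero_iff x]
    have a := h1.dotProduct_mulVec_nonneg x
    have b := h2.dotProduct_mulVec_nonneg x
    simp only [neg_mulVec, dotProduct_neg, neg_nonneg] at b
    linarith
  ext i j
  have := congrFun (hz (Pi.single j 1)) i
  simpa [mulVec_single] using this

theorem S_zero_constant_of_jump_condition
    {n N : ℕ} (δ : ℝ) (hδ : 0 < δ)
    (P : Set (Fin N → ℝ)) (hP : P.Nonempty)
    (S : ℝ → (Fin N → ℝ) → Matrix (Fin n) (Fin n) ℝ)
    (hS_cont : ContinuousOn (fun p : ℝ × (Fin N → ℝ) => S p.1 p.2) (Icc 0 δ ×ˢ P))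
    (hS_symm : ∀ τ ∈ Icc (0 : ℝ) δ, ∀ θ ∈ P, (S τ θ).IsSymm)
    (hjump : ∀ θ ∈ P, ∀ η ∈ P, ∀ ε ∈ Ioc (0 : ℝ) δ, (S ε η - S 0 θ).PosSemidef) :
    ∀ θ ∈ P, ∀ η ∈ P, S 0 θ = S 0 η := by
  have key : ∀ θ ∈ P, ∀ η ∈ P, (S 0 η - S 0 θ).PosSemidef := by
    intro θ hθ η hη
    have h0mem : (0 : ℝ) ∈ Icc (0 : ℝ) δ := ⟨le_refl _, hδ.le⟩
    have hherm : (S 0 η - S 0 θ).IsHermitian := by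
      have h1 := hS_symm 0 h0mem η hη
      have h2 := hS_symm 0 h0mem θ hθ
      ext i j
      simp only [Matrix.conjTranspose_apply, Matrix.sub_apply, star_trivial,
        h1.apply i j, h2.apply i j]
    refine Matrix.PosSemidef.of_dotProduct_mulVec_nonneg hherm (fun x => ?_)
    have hcont : ContinuousOn (fun ε : ℝ => S ε η) (Icc 0 δ) := by
      have hc : ContinuousOn (fun ε : ℝ => ((ε, η) : ℝ × (Fin N → ℝ))) (Icc 0 δ) :=
        (continuous_id.prodMk continuous_const).continuousOn
      exact hS_cont.comp hc (fun ε hε => ⟨hε, hη⟩)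
    have hq : ContinuousOn (fun ε : ℝ => star x ⬝ᵥ (S ε η) *ᵥ x) (Icc 0 δ) := by
      have hM : Continuous (fun M : Matrix (Fin n) (Fin n) ℝ => star x ⬝ᵥ M *ᵥ x) := by
        simp only [dotProduct, Matrix.mulVec]
        refine continuous_finset_sum _ fun i _ => Continuous.mul continuous_const ?_
        refine continuous_finset_sum _ fun j _ => Continuous.mul ?_ continuous_const
        exact (continuous_apply j).comp (continuous_apply i)
      exact hM.comp_continuousOn hcont
    have hne : (𝓝[Ioc (0:ℝ) δ] (0:ℝ)).NeBot := by
      apply mem_closure_iff_nhdsWithin_neBot.mp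
      rw [closure_Ioc hδ.ne]
      exact ⟨le_refl _, hδ.le⟩
    have htend : Filter.Tendsto (fun ε : ℝ => star x ⬝ᵥ (S ε η) *ᵥ x)
        (𝓝[Ioc (0:ℝ) δ] (0:ℝ)) (𝓝 (star x ⬝ᵥ (S 0 η) *ᵥ x)) :=
      (hq 0 h0mem).tendsto.mono_left (nhdsWithin_mono _ Ioc_subset_Icc_self)
    have hlb : ∀ᶠ ε in 𝓝[Ioc (0:ℝ) δ] (0:ℝ),
        star x ⬝ᵥ (S 0 θ) *ᵥ x ≤ star x ⬝ᵥ (S ε η) *ᵥ x := by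
      refine eventually_nhdsWithin_of_forall (fun ε hε => ?_)
      have := (hjump θ hθ η hη ε hε).dotProduct_mulVec_nonneg x
      simp only [Matrix.sub_mulVec, dotProduct_sub] at this
      linarith
    have hle := ge_of_tendsto htend hlb
    simp only [Matrix.sub_mulVec, dotProduct_sub]
    linarith
  intro θ hθ η hη
  have h1 := key θ hθ η hη
  have h2 := key η hη θ hθ
  have h0 : S 0 η - S 0 θ = 0 := psd_neg_psd_eq_zero h1 (by simpa [neg_sub] using h2)
  have := sub_eq_zero.mp h0
  exact this.symm
end
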